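/- arXiv:2507.14940 — 3 statements merged into one kernel-verified Lean document; each statement's English description precedes it below -/
import Mathlib

section
/- For any complex m×n matrices A and Ã, with H = (AᴴA)^{1/2} and H̃ = (ÃᴴÃ)^{1/2}, one has ‖H − H̃‖_F ≤ √2 · ‖A − Ã‖_F. -/
open scoped BigOperators Matrix ComplexOrder

noncomputable def frob {m n : ℕ} (A : Matrix (Fin m) (Fin n) ℂ) : ℝ :=
  Real.sqrt (∑ i, ∑ j, ‖A i j‖ ^ 2)

noncomputable def absMat {m n : ℕ} (A : Matrix (Fin m) (Fin n) ℂ) :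
    Matrix (Fin n) (Fin n) ℂ :=
  (Matrix.posSemidef_conjTranspose_mul_self A).1.eigenvectorUnitary.1 *
    Matrix.diagonal ((↑) ∘ (√·) ∘ (Matrix.posSemidef_conjTranspose_mul_self A).1.eigenvalues) *
    (star (Matrix.posSemidef_conjTranspose_mul_self A).1.eigenvectorUnitary : Matrix (Fin n) (Fin n) ℂ)

noncomputable def svdMat (m n r : ℕ) (σ : ℕ → ℝ) : Matrix (Fin m) (Fin n) ℂ :=
  Matrix.of fun i j =>
    if (i : ℕ) = (j : ℕ) ∧ (i : ℕ) < r then ((σ ((i : ℕ) + 1) : ℝ) : ℂ) else 0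

/-- `A` admits a singular value decomposition with singular values
`σ 1, …, σ r` (indexed from 1) on the diagonal. -/
def HasSVD {m n : ℕ} (A : Matrix (Fin m) (Fin n) ℂ) (r : ℕ) (σ : ℕ → ℝ) : Prop :=
  ∃ (U : Matrix (Fin m) (Fin m) ℂ) (V : Matrix (Fin n) (Fin n) ℂ),
    Uᴴ * U = 1 ∧ U * Uᴴ = 1 ∧ Vᴴ * V = 1 ∧ V * Vᴴ = 1 ∧
    A = U * svdMat m n r σ * Vᴴ

/-- `σ 1 ≥ σ 2 ≥ … ≥ σ r > 0`. -/
def SingVals (r : ℕ) (σ : ℕ → ℝ) : Prop :=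
  (∀ j, 1 ≤ j → j ≤ r → 0 < σ j) ∧ ∀ j, 1 ≤ j → j < r → σ (j + 1) ≤ σ j

/-- Generalized polar decomposition: `A = Q * |A|`, where `Q` is a rank-`r` partial
isometry such that the column space of `Qᴴ` equals the column space of `|A|`. -/
def IsPolar {m n : ℕ} (A Q : Matrix (Fin m) (Fin n) ℂ) (r : ℕ) : Prop :=
  A = Q * absMat A ∧ Q * Qᴴ * Q = Q ∧ Q.rank = r ∧
    LinearMap.range (Matrix.mulVecLin Qᴴ) =
      LinearMap.range (Matrix.mulVecLin (absMat A))

/-! ### Auxiliary material for the Araki–Yamagami inequality -/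

noncomputable def msqrt {k : Type*} [Fintype k] [DecidableEq k] (M : Matrix k k ℂ) :
    Matrix k k ℂ := cfc Real.sqrt M

lemma msqrt_spec_nonneg {k : Type*} [Fintype k] [DecidableEq k] {M : Matrix k k ℂ}
    (hM : M.PosSemidef) {x : ℝ} (hx : x ∈ spectrum ℝ M) : 0 ≤ x := by
  rw [hM.1.spectrum_real_eq_range_eigenvalues] at hx
  obtain ⟨i, rfl⟩ := hx
  exact hM.eigenvalues_nonneg i

lemma eq_msqrt_of_sq_eq {k : Type*} [Fintype k] [DecidableEq k] {A : Matrix k k ℂ}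
    (hA : A.PosSemidef) (M : Matrix k k ℂ) (h : A ^ 2 = M) : A = msqrt M := by
  have hsa : IsSelfAdjoint A := hA.1
  rw [msqrt, ← h, ← cfc_comp_pow Real.sqrt 2 A (ha := hsa)]
  conv_lhs => rw [← cfc_id ℝ A hsa]
  refine cfc_congr fun x hx => ?_
  have hx0 := msqrt_spec_nonneg hA hx
  simp [abs_of_nonneg hx0, Real.sqrt_sq hx0]

lemma msqrt_mul_self {k : Type*} [Fintype k] [DecidableEq k] (M : Matrix k k ℂ)
    (hM : M.PosSemidef) : msqrt M * msqrt M = M := by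
  have hsa : IsSelfAdjoint M := hM.1
  rw [msqrt, ← cfc_mul Real.sqrt Real.sqrt M]
  conv_rhs => rw [← cfc_id ℝ M hsa]
  refine cfc_congr fun x hx => ?_
  have hx0 := msqrt_spec_nonneg hM hx
  simp [Real.mul_self_sqrt hx0]

lemma msqrt_psd {k : Type*} [Fintype k] [DecidableEq k] (M : Matrix k k ℂ)
    (hM : M.PosSemidef) : (msqrt M).PosSemidef := by
  rw [msqrt, hM.1.cfc_eq, Matrix.IsHermitian.cfc, Unitary.conjStarAlgAut_apply]
  have hd : (Matrix.diagonal (RCLike.ofReal ∘ Real.sqrt ∘ hM.1.eigenvalues : k → ℂ)).PosSemidef :=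
    Matrix.posSemidef_diagonal_iff.mpr fun i => Complex.zero_le_real.mpr (Real.sqrt_nonneg _)
  simpa [Matrix.star_eq_conjTranspose] using
    hd.mul_mul_conjTranspose_same (hM.1.eigenvectorUnitary : Matrix k k ℂ)

lemma absMat_eq {m n : ℕ} (A : Matrix (Fin m) (Fin n) ℂ) : absMat A = msqrt (Aᴴ * A) := by
  rw [msqrt, (Matrix.posSemidef_conjTranspose_mul_self A).1.cfc_eq, Matrix.IsHermitian.cfc,
    Unitary.conjStarAlgAut_apply]
  rfl

noncomputable def frobSq {m n : Type*} [Fintype m] [Fintype n]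
    (A : Matrix m n ℂ) : ℝ := ∑ i, ∑ j, ‖A i j‖ ^ 2

lemma frobSq_nonneg {m n : Type*} [Fintype m] [Fintype n] (A : Matrix m n ℂ) :
    0 ≤ frobSq A :=
  Finset.sum_nonneg fun _ _ => Finset.sum_nonneg fun _ _ => sq_nonneg _

lemma frobSq_zero {m n : Type*} [Fintype m] [Fintype n] :
    frobSq (0 : Matrix m n ℂ) = 0 := by simp [frobSq]

lemma frobSq_eq_trace {n : Type*} [Fintype n] {m : Type*} [Fintype m]
    (A : Matrix m n ℂ) : frobSq A = (Matrix.trace (Aᴴ * A)).re := by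
  simp only [Matrix.trace, Matrix.diag, Matrix.mul_apply, Matrix.conjTranspose_apply,
    frobSq]
  rw [Finset.sum_comm]
  simp [Complex.sq_norm, Complex.normSq_apply, Complex.mul_re]

lemma frobSq_conjTranspose {m n : Type*} [Fintype m] [Fintype n]
    (A : Matrix m n ℂ) : frobSq Aᴴ = frobSq A := by
  simp only [frobSq, Matrix.conjTranspose_apply]
  rw [Finset.sum_comm]
  simp

lemma frobSq_conj {k l : Type*} [Fintype k] [Fintype l] [DecidableEq k] [DecidableEq l]
    (U : Matrix k k ℂ) (V : Matrix l l ℂ) (M : Matrix k l ℂ)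
    (hU : U * Uᴴ = 1) (hV : V * Vᴴ = 1) :
    frobSq (Uᴴ * M * V) = frobSq M := by
  rw [frobSq_eq_trace, frobSq_eq_trace]
  congr 1
  rw [Matrix.conjTranspose_mul, Matrix.conjTranspose_mul, Matrix.conjTranspose_conjTranspose]
  simp only [Matrix.mul_assoc]
  rw [← Matrix.mul_assoc U Uᴴ, hU, Matrix.one_mul, Matrix.trace_mul_comm (Vᴴ),
    Matrix.mul_assoc, Matrix.mul_assoc, hV, Matrix.mul_one]

lemma frobSq_diag_comm {k : Type*} [Fintype k] [DecidableEq k]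
    (a b : k → ℝ) (W : Matrix k k ℂ) :
    frobSq (Matrix.diagonal (fun i => (a i : ℂ)) * W
         - W * Matrix.diagonal (fun j => (b j : ℂ)))
      = ∑ i, ∑ j, (a i - b j) ^ 2 * ‖W i j‖ ^ 2 := by
  simp only [frobSq, Matrix.sub_apply, Matrix.diagonal_mul, Matrix.mul_diagonal]
  refine Finset.sum_congr rfl fun i _ => Finset.sum_congr rfl fun j _ => ?_
  have : (a i : ℂ) * W i j - W i j * (b j : ℂ) = ((a i - b j : ℝ) : ℂ) * W i j := by
    push_cast; ring
  rw [this, norm_mul, mul_pow, Complex.norm_real, Real.norm_eq_abs, sq_abs]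

lemma udu_mul_udu {k : Type*} [Fintype k] [DecidableEq k]
    (U : Matrix k k ℂ) (hU1 : Uᴴ * U = 1) (f g : k → ℂ) :
    (U * Matrix.diagonal f * Uᴴ) * (U * Matrix.diagonal g * Uᴴ)
      = U * Matrix.diagonal (fun i => f i * g i) * Uᴴ := by
  simp only [Matrix.mul_assoc]
  rw [← Matrix.mul_assoc Uᴴ U, hU1, Matrix.one_mul,
    ← Matrix.mul_assoc (Matrix.diagonal f), Matrix.diagonal_mul_diagonal]

lemma spectral' {k : Type*} [Fintype k] [DecidableEq k]
    {X : Matrix k k ℂ} (hX : X.IsHermitian) :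
    X = (hX.eigenvectorUnitary : Matrix k k ℂ)
        * Matrix.diagonal (fun i => ((hX.eigenvalues i : ℝ) : ℂ))
        * (hX.eigenvectorUnitary : Matrix k k ℂ)ᴴ := by
  have hspec := hX.spectral_theorem
  rw [Unitary.conjStarAlgAut_apply, Matrix.star_eq_conjTranspose] at hspec
  exact hspec

lemma sqrt_eq_spectral {k : Type*} [Fintype k] [DecidableEq k]
    {X : Matrix k k ℂ} (hX : X.IsHermitian) :
    msqrt (Xᴴ * X)
      = (hX.eigenvectorUnitary : Matrix k k ℂ)
        * Matrix.diagonal (fun i => ((|hX.eigenvalues i| : ℝ) : ℂ))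
        * (hX.eigenvectorUnitary : Matrix k k ℂ)ᴴ := by
  set U := (hX.eigenvectorUnitary : Matrix k k ℂ) with hUdef
  have hU1 : Uᴴ * U = 1 := by
    simpa [Matrix.star_eq_conjTranspose] using hX.eigenvectorUnitary.2.1
  set B := U * Matrix.diagonal (fun i => ((|hX.eigenvalues i| : ℝ) : ℂ)) * Uᴴ with hB
  have hBpsd : Matrix.PosSemidef B := by
    have hd : Matrix.PosSemidef (Matrix.diagonal (fun i => ((|hX.eigenvalues i| : ℝ) : ℂ))) := by
      refine Matrix.posSemidef_diagonal_iff.mpr fun i => ?_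
      exact_mod_cast abs_nonneg _
    simpa [Matrix.star_eq_conjTranspose] using hd.mul_mul_conjTranspose_same U
  symm
  refine eq_msqrt_of_sq_eq hBpsd _ ?_
  rw [pow_two, hB, udu_mul_udu U hU1, hX.eq]
  conv_rhs => rw [spectral' hX, ← hUdef, udu_mul_udu U hU1]
  have hfun : (fun i => ((|hX.eigenvalues i| : ℝ) : ℂ) * ((|hX.eigenvalues i| : ℝ) : ℂ))
      = (fun i => ((hX.eigenvalues i : ℝ) : ℂ) * ((hX.eigenvalues i : ℝ) : ℂ)) := by
    funext i; norm_cast; exact abs_mul_abs_self _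
  rw [hfun]

lemma herm_key {k : Type*} [Fintype k] [DecidableEq k]
    {X Y : Matrix k k ℂ} (hX : X.IsHermitian) (hY : Y.IsHermitian) :
    frobSq (msqrt (Xᴴ * X)
          - msqrt (Yᴴ * Y)) ≤ frobSq (X - Y) := by
  set U := (hX.eigenvectorUnitary : Matrix k k ℂ) with hUdef
  set V := (hY.eigenvectorUnitary : Matrix k k ℂ) with hVdef
  have hU1 : Uᴴ * U = 1 := by
    simpa [Matrix.star_eq_conjTranspose] using hX.eigenvectorUnitary.2.1
  have hU2 : U * Uᴴ = 1 := by
    simpa [Matrix.star_eq_conjTranspose] using hX.eigenvectorUnitary.2.2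
  have hV1 : Vᴴ * V = 1 := by
    simpa [Matrix.star_eq_conjTranspose] using hY.eigenvectorUnitary.2.1
  have hV2 : V * Vᴴ = 1 := by
    simpa [Matrix.star_eq_conjTranspose] using hY.eigenvectorUnitary.2.2
  set d := hX.eigenvalues
  set e := hY.eigenvalues
  set W := Uᴴ * V with hW
  have conj_eq : ∀ (a b : k → ℝ),
      Uᴴ * (U * Matrix.diagonal (fun i => ((a i : ℝ) : ℂ)) * Uᴴ
          - V * Matrix.diagonal (fun i => ((b i : ℝ) : ℂ)) * Vᴴ) * V
      = Matrix.diagonal (fun i => ((a i : ℝ) : ℂ)) * W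
        - W * Matrix.diagonal (fun i => ((b i : ℝ) : ℂ)) := by
    intro a b
    rw [Matrix.mul_sub, Matrix.sub_mul]
    congr 1
    · simp only [Matrix.mul_assoc]
      rw [← Matrix.mul_assoc Uᴴ U, hU1, Matrix.one_mul]
    · simp only [Matrix.mul_assoc]
      rw [hV1, Matrix.mul_one, ← Matrix.mul_assoc]
  have h1 : frobSq (msqrt (Xᴴ * X)
          - msqrt (Yᴴ * Y))
      = ∑ i, ∑ j, (|d i| - |e j|) ^ 2 * ‖W i j‖ ^ 2 := by
    rw [← frobSq_conj U V _ hU2 hV2, sqrt_eq_spectral hX, sqrt_eq_spectral hY,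
      ← hUdef, ← hVdef, conj_eq, frobSq_diag_comm]
  have h2 : frobSq (X - Y) = ∑ i, ∑ j, (d i - e j) ^ 2 * ‖W i j‖ ^ 2 := by
    rw [← frobSq_conj U V _ hU2 hV2]
    conv_lhs => rw [spectral' hX, spectral' hY, ← hUdef, ← hVdef]
    rw [conj_eq, frobSq_diag_comm]
  rw [h1, h2]
  refine Finset.sum_le_sum fun i _ => Finset.sum_le_sum fun j _ => ?_
  have habs : |(|d i| - |e j|)| ≤ |d i - e j| := abs_abs_sub_abs_le_abs_sub _ _
  have : (|d i| - |e j|) ^ 2 ≤ (d i - e j) ^ 2 := by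
    rw [← sq_abs (|d i| - |e j|), ← sq_abs (d i - e j)]
    exact pow_le_pow_left₀ (abs_nonneg _) habs 2
  exact mul_le_mul_of_nonneg_right this (sq_nonneg _)

lemma frobSq_fromBlocks {a b c d : Type*} [Fintype a] [Fintype b] [Fintype c] [Fintype d]
    (P : Matrix a c ℂ) (B : Matrix a d ℂ) (C : Matrix b c ℂ) (Q : Matrix b d ℂ) :
    frobSq (Matrix.fromBlocks P B C Q) = frobSq P + frobSq B + frobSq C + frobSq Q := by
  simp only [frobSq, Fintype.sum_sum_type, Matrix.fromBlocks_apply₁₁, Matrix.fromBlocks_apply₁₂,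
    Matrix.fromBlocks_apply₂₁, Matrix.fromBlocks_apply₂₂, Finset.sum_add_distrib]
  ring

lemma posSemidef_fromBlocks_diag {a b : Type*} [Fintype a] [Fintype b] [DecidableEq a]
    [DecidableEq b] {P : Matrix a a ℂ} {Q : Matrix b b ℂ}
    (hP : P.PosSemidef) (hQ : Q.PosSemidef) :
    (Matrix.fromBlocks P 0 0 Q).PosSemidef := by
  obtain ⟨B₁, hB₁⟩ : ∃ B, P = Bᴴ * B :=
    ⟨msqrt P, by rw [(msqrt_psd P hP).1.eq, msqrt_mul_self P hP]⟩
  obtain ⟨B₂, hB₂⟩ : ∃ B, Q = Bᴴ * B :=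
    ⟨msqrt Q, by rw [(msqrt_psd Q hQ).1.eq, msqrt_mul_self Q hQ]⟩
  have : Matrix.fromBlocks P 0 0 Q
      = (Matrix.fromBlocks B₁ 0 0 B₂)ᴴ * (Matrix.fromBlocks B₁ 0 0 B₂) := by
    rw [Matrix.fromBlocks_conjTranspose, Matrix.fromBlocks_multiply]
    simp [hB₁, hB₂]
  rw [this]
  exact Matrix.posSemidef_conjTranspose_mul_self _

lemma fromBlocks_sub' {a b c d : Type*}
    (P P' : Matrix a c ℂ) (B B' : Matrix a d ℂ) (C C' : Matrix b c ℂ) (Q Q' : Matrix b d ℂ) :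
    Matrix.fromBlocks P B C Q - Matrix.fromBlocks P' B' C' Q'
      = Matrix.fromBlocks (P - P') (B - B') (C - C') (Q - Q') := by
  ext i j
  cases i <;> cases j <;> simp [Matrix.fromBlocks]

lemma sqrt_block {m n : ℕ} (A : Matrix (Fin m) (Fin n) ℂ) :
    msqrt ((Matrix.fromBlocks 0 Aᴴ A 0 : Matrix (Fin n ⊕ Fin m) (Fin n ⊕ Fin m) ℂ)ᴴ *
        (Matrix.fromBlocks 0 Aᴴ A 0 : Matrix (Fin n ⊕ Fin m) (Fin n ⊕ Fin m) ℂ))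
      = Matrix.fromBlocks (absMat A) 0 0 (absMat Aᴴ) := by
  symm
  have h1 : Matrix.PosSemidef (absMat A) :=
    by rw [absMat_eq]; exact msqrt_psd _ (Matrix.posSemidef_conjTranspose_mul_self A)
  have h2 : Matrix.PosSemidef (absMat Aᴴ) :=
    by rw [absMat_eq]; exact msqrt_psd _ (Matrix.posSemidef_conjTranspose_mul_self Aᴴ)
  refine eq_msqrt_of_sq_eq (posSemidef_fromBlocks_diag h1 h2) _ ?_
  rw [pow_two, Matrix.fromBlocks_multiply]
  have e1 : absMat A * absMat A = Aᴴ * A :=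
    by rw [absMat_eq]; exact msqrt_mul_self _ (Matrix.posSemidef_conjTranspose_mul_self A)
  have e2 : absMat Aᴴ * absMat Aᴴ = (Aᴴ)ᴴ * Aᴴ :=
    by rw [absMat_eq]; exact msqrt_mul_self _ (Matrix.posSemidef_conjTranspose_mul_self Aᴴ)
  rw [Matrix.fromBlocks_conjTranspose, Matrix.fromBlocks_multiply]
  simp [e1, e2]

theorem araki_yamagami
    (m n : ℕ) (A At : Matrix (Fin m) (Fin n) ℂ) :
    frob (absMat A - absMat At) ≤ Real.sqrt 2 * frob (A - At) := by
  set T : Matrix (Fin n ⊕ Fin m) (Fin n ⊕ Fin m) ℂ := Matrix.fromBlocks 0 Aᴴ A 0 with hT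
  set S : Matrix (Fin n ⊕ Fin m) (Fin n ⊕ Fin m) ℂ := Matrix.fromBlocks 0 Atᴴ At 0 with hS
  have hTh : T.IsHermitian := by
    rw [Matrix.IsHermitian, hT, Matrix.fromBlocks_conjTranspose]
    simp
  have hSh : S.IsHermitian := by
    rw [Matrix.IsHermitian, hS, Matrix.fromBlocks_conjTranspose]
    simp
  have key := herm_key hTh hSh
  rw [sqrt_block A, sqrt_block At, fromBlocks_sub'] at key
  rw [hT, hS, fromBlocks_sub'] at key
  rw [frobSq_fromBlocks, frobSq_fromBlocks] at key
  simp only [sub_zero, frobSq_zero, add_zero, zero_add] at key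
  have hconj : frobSq (Aᴴ - Atᴴ) = frobSq (A - At) := by
    rw [← Matrix.conjTranspose_sub, frobSq_conjTranspose]
  have hmain : frobSq (absMat A - absMat At) ≤ 2 * frobSq (A - At) := by
    have := frobSq_nonneg (absMat Aᴴ - absMat Atᴴ)
    linarith [key, hconj]
  have hf : frob (absMat A - absMat At) = Real.sqrt (frobSq (absMat A - absMat At)) := rfl
  have hf2 : frob (A - At) = Real.sqrt (frobSq (A - At)) := rfl
  rw [hf, hf2, ← Real.sqrt_mul (by norm_num : (2:ℝ) ≥ 0)]
  exact Real.sqrt_le_sqrt hmain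
end

section
/- Let m, n be positive integers, let r ≤ s ≤ min(m,n), let A be a complex m×n matrix of rank r with singular values σ_1 ≥ … ≥ σ_r > 0, and let B be a complex m×n matrix of rank s with singular values σ̂_1 ≥ … ≥ σ̂_s > 0. Then |tr(BᴴA)| ≤ ( Σ_{j=1}^r σ_j σ̂_j ) / ( (Σ_{j=1}^r σ_j²)^{1/2} (Σ_{j=1}^s σ̂_j²)^{1/2} ) · ‖A‖_F ‖B‖_F. -/
open scoped BigOperators Matrix ComplexOrder

/-! ### Auxiliary lemmas -/

lemma cutsum' {M : Type*} [AddCommMonoid M] (N K : ℕ) (h : K ≤ N) (g : ℕ → M) :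
    ∑ i ∈ Finset.range N, (if i < K then g i else 0) = ∑ i ∈ Finset.range K, g i := by
  rw [← Finset.sum_subset (Finset.range_subset_range.mpr h)
      (fun x _ hx => by rw [if_neg (by simpa using hx)])]
  exact Finset.sum_congr rfl fun x hx => if_pos (Finset.mem_range.mp hx)

lemma telescope (f : ℕ → ℝ) (t r : ℕ) (ht : t ≤ r + 1) :
    ∑ k ∈ Finset.Icc t r, (f k - f (k+1)) = f t - f (r+1) := by
  rw [← Finset.Ico_add_one_right_eq_Icc, Finset.sum_Ico_eq_sum_range]
  have := Finset.sum_range_sub' (fun i => f (t + i)) (r + 1 - t)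
  simp only [← Nat.add_assoc] at this
  rw [this]
  congr 2
  omega

lemma substoch_bound (r s : ℕ) (hrs : r ≤ s) (σ σh : ℕ → ℝ)
    (hσpos : ∀ j, 1 ≤ j → j ≤ r → 0 < σ j) (hσmono : ∀ j, 1 ≤ j → j < r → σ (j + 1) ≤ σ j)
    (hσhpos : ∀ j, 1 ≤ j → j ≤ s → 0 < σh j) (hσhmono : ∀ j, 1 ≤ j → j < s → σh (j + 1) ≤ σh j)
    (d : ℕ → ℕ → ℝ) (hd0 : ∀ i j, 0 ≤ d i j)
    (hrow : ∀ j < s, ∑ i ∈ Finset.range r, d i j ≤ 1)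
    (hcol : ∀ i < r, ∑ j ∈ Finset.range s, d i j ≤ 1) :
    ∑ j ∈ Finset.range s, ∑ i ∈ Finset.range r, σ (i+1) * σh (j+1) * d i j
      ≤ ∑ j ∈ Finset.Icc 1 r, σ j * σh j := by
  classical
  set σ' : ℕ → ℝ := fun k => if k ≤ r then σ k else 0 with hσ'
  set σh' : ℕ → ℝ := fun k => if k ≤ s then σh k else 0 with hσh'
  set δ : ℕ → ℝ := fun k => σ' k - σ' (k+1) with hδ
  set δh : ℕ → ℝ := fun k => σh' k - σh' (k+1) with hδh
  have hδ0 : ∀ k, 1 ≤ k → 0 ≤ δ k := by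
    intro k hk
    simp only [hδ, hσ', sub_nonneg]
    split_ifs with h1 h2 h2
    · exact hσmono k hk (by omega)
    · omega
    · exact (hσpos k hk h2).le
    · exact le_rfl
  have hδh0 : ∀ k, 1 ≤ k → 0 ≤ δh k := by
    intro k hk
    simp only [hδh, hσh', sub_nonneg]
    split_ifs with h1 h2 h2
    · exact hσhmono k hk (by omega)
    · omega
    · exact (hσhpos k hk h2).le
    · exact le_rfl
  have htel : ∀ t, 1 ≤ t → ∑ k ∈ Finset.Icc t r, δ k = σ' t := by
    intro t ht
    by_cases h : t ≤ r + 1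
    · rw [hδ, telescope σ' t r h]
      have h2 : σ' (r+1) = 0 := by simp only [hσ']; rw [if_neg (by omega)]
      rw [h2, sub_zero]
    · rw [Finset.Icc_eq_empty (by omega), Finset.sum_empty]
      simp only [hσ']; rw [if_neg (by omega)]
  have hhtel : ∀ t, 1 ≤ t → ∑ k ∈ Finset.Icc t s, δh k = σh' t := by
    intro t ht
    by_cases h : t ≤ s + 1
    · rw [hδh, telescope σh' t s h]
      have h2 : σh' (s+1) = 0 := by simp only [hσh']; rw [if_neg (by omega)]
      rw [h2, sub_zero]
    · rw [Finset.Icc_eq_empty (by omega), Finset.sum_empty]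
      simp only [hσh']; rw [if_neg (by omega)]
  have e1 : ∀ t, t < r → σ (t+1) = ∑ k ∈ Finset.Icc 1 r, (if t < k then δ k else 0) := by
    intro t ht
    rw [← Finset.sum_filter]
    have hf : (Finset.Icc 1 r).filter (fun k => t < k) = Finset.Icc (t+1) r := by
      ext k; simp only [Finset.mem_filter, Finset.mem_Icc]; omega
    rw [hf, htel (t+1) (by omega)]
    simp only [hσ']; rw [if_pos (by omega)]
  have e2 : ∀ t, t < s → σh (t+1) = ∑ l ∈ Finset.Icc 1 s, (if t < l then δh l else 0) := by
    intro t ht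
    rw [← Finset.sum_filter]
    have hf : (Finset.Icc 1 s).filter (fun l => t < l) = Finset.Icc (t+1) s := by
      ext l; simp only [Finset.mem_filter, Finset.mem_Icc]; omega
    rw [hf, hhtel (t+1) (by omega)]
    simp only [hσh']; rw [if_pos (by omega)]
  have step1 : ∑ j ∈ Finset.range s, ∑ i ∈ Finset.range r, σ (i+1) * σh (j+1) * d i j
      = ∑ k ∈ Finset.Icc 1 r, ∑ l ∈ Finset.Icc 1 s, δ k * δh l *
          (∑ j ∈ Finset.range l, ∑ i ∈ Finset.range k, d i j) := by
    calc ∑ j ∈ Finset.range s, ∑ i ∈ Finset.range r, σ (i+1) * σh (j+1) * d i j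
        = ∑ j ∈ Finset.range s, ∑ i ∈ Finset.range r, ∑ k ∈ Finset.Icc 1 r,
            ∑ l ∈ Finset.Icc 1 s,
            (if i < k then (if j < l then δ k * δh l * d i j else 0) else 0) := by
          refine Finset.sum_congr rfl fun j hj => Finset.sum_congr rfl fun i hi => ?_
          rw [e1 i (Finset.mem_range.mp hi), e2 j (Finset.mem_range.mp hj),
            Finset.sum_mul_sum, Finset.sum_mul]
          refine Finset.sum_congr rfl fun k _ => ?_
          rw [Finset.sum_mul]
          refine Finset.sum_congr rfl fun l _ => ?_
          split_ifs <;> ring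
      _ = ∑ j ∈ Finset.range s, ∑ k ∈ Finset.Icc 1 r, ∑ i ∈ Finset.range r,
            ∑ l ∈ Finset.Icc 1 s,
            (if i < k then (if j < l then δ k * δh l * d i j else 0) else 0) :=
          Finset.sum_congr rfl fun j _ => Finset.sum_comm
      _ = ∑ k ∈ Finset.Icc 1 r, ∑ j ∈ Finset.range s, ∑ i ∈ Finset.range r,
            ∑ l ∈ Finset.Icc 1 s,
            (if i < k then (if j < l then δ k * δh l * d i j else 0) else 0) :=
          Finset.sum_comm
      _ = ∑ k ∈ Finset.Icc 1 r, ∑ j ∈ Finset.range s, ∑ l ∈ Finset.Icc 1 s,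
            ∑ i ∈ Finset.range r,
            (if i < k then (if j < l then δ k * δh l * d i j else 0) else 0) :=
          Finset.sum_congr rfl fun k _ => Finset.sum_congr rfl fun j _ => Finset.sum_comm
      _ = ∑ k ∈ Finset.Icc 1 r, ∑ l ∈ Finset.Icc 1 s, ∑ j ∈ Finset.range s,
            ∑ i ∈ Finset.range r,
            (if i < k then (if j < l then δ k * δh l * d i j else 0) else 0) :=
          Finset.sum_congr rfl fun k _ => Finset.sum_comm
      _ = ∑ k ∈ Finset.Icc 1 r, ∑ l ∈ Finset.Icc 1 s, δ k * δh l *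
            (∑ j ∈ Finset.range l, ∑ i ∈ Finset.range k, d i j) := by
          refine Finset.sum_congr rfl fun k hk => Finset.sum_congr rfl fun l hl => ?_
          rw [Finset.mem_Icc] at hk hl
          have inner : ∀ j, ∑ i ∈ Finset.range r,
              (if i < k then (if j < l then δ k * δh l * d i j else 0) else 0)
              = if j < l then ∑ i ∈ Finset.range k, δ k * δh l * d i j else 0 := by
            intro j
            rw [cutsum' r k hk.2]
            by_cases hj : j < l
            · simp only [if_pos hj]
            · simp only [if_neg hj, Finset.sum_const_zero]
          rw [Finset.sum_congr rfl fun j _ => inner j,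
            cutsum' s l hl.2 (fun j => ∑ i ∈ Finset.range k, δ k * δh l * d i j)]
          rw [Finset.mul_sum]
          exact Finset.sum_congr rfl fun j _ => by rw [Finset.mul_sum]
  rw [step1]
  have step2 : ∑ k ∈ Finset.Icc 1 r, ∑ l ∈ Finset.Icc 1 s, δ k * δh l *
          (∑ j ∈ Finset.range l, ∑ i ∈ Finset.range k, d i j)
      ≤ ∑ k ∈ Finset.Icc 1 r, ∑ l ∈ Finset.Icc 1 s, δ k * δh l *
          ∑ t ∈ Finset.range r, (if t < k then (if t < l then (1:ℝ) else 0) else 0) := by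
    refine Finset.sum_le_sum fun k hk => Finset.sum_le_sum fun l hl => ?_
    rw [Finset.mem_Icc] at hk hl
    have hmin : ∑ t ∈ Finset.range r, (if t < k then (if t < l then (1:ℝ) else 0) else 0)
        = min (k:ℝ) (l:ℝ) := by
      have h0 : ∀ t, (if t < k then (if t < l then (1:ℝ) else 0) else 0)
          = (if t < min k l then (1:ℝ) else 0) := by
        intro t; split_ifs with h1 h2 h3 h3 <;> first | rfl | omega
      rw [Finset.sum_congr rfl fun t _ => h0 t,
        cutsum' r (min k l) (by omega) (fun _ => (1:ℝ))]
      simp [Nat.cast_min]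
    rw [hmin]
    have hS1 : ∑ j ∈ Finset.range l, ∑ i ∈ Finset.range k, d i j ≤ (l : ℝ) := by
      calc ∑ j ∈ Finset.range l, ∑ i ∈ Finset.range k, d i j
          ≤ ∑ j ∈ Finset.range l, (1:ℝ) := by
            refine Finset.sum_le_sum fun j hj => ?_
            calc ∑ i ∈ Finset.range k, d i j
                ≤ ∑ i ∈ Finset.range r, d i j :=
                  Finset.sum_le_sum_of_subset_of_nonneg
                    (Finset.range_subset_range.mpr hk.2) (fun i _ _ => hd0 i j)
              _ ≤ 1 := hrow j (by have := Finset.mem_range.mp hj; omega)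
        _ = (l : ℝ) := by simp
    have hS2 : ∑ j ∈ Finset.range l, ∑ i ∈ Finset.range k, d i j ≤ (k : ℝ) := by
      rw [Finset.sum_comm]
      calc ∑ i ∈ Finset.range k, ∑ j ∈ Finset.range l, d i j
          ≤ ∑ i ∈ Finset.range k, (1:ℝ) := by
            refine Finset.sum_le_sum fun i hi => ?_
            calc ∑ j ∈ Finset.range l, d i j
                ≤ ∑ j ∈ Finset.range s, d i j :=
                  Finset.sum_le_sum_of_subset_of_nonneg
                    (Finset.range_subset_range.mpr hl.2) (fun j _ _ => hd0 i j)
              _ ≤ 1 := hcol i (by have := Finset.mem_range.mp hi; omega)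
        _ = (k : ℝ) := by simp
    exact mul_le_mul_of_nonneg_left (le_min hS2 hS1)
      (mul_nonneg (hδ0 k hk.1) (hδh0 l hl.1))
  refine step2.trans ?_
  have step3 : ∑ k ∈ Finset.Icc 1 r, ∑ l ∈ Finset.Icc 1 s, δ k * δh l *
          ∑ t ∈ Finset.range r, (if t < k then (if t < l then (1:ℝ) else 0) else 0)
      = ∑ t ∈ Finset.range r, σ (t+1) * σh (t+1) := by
    calc ∑ k ∈ Finset.Icc 1 r, ∑ l ∈ Finset.Icc 1 s, δ k * δh l *
            ∑ t ∈ Finset.range r, (if t < k then (if t < l then (1:ℝ) else 0) else 0)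
        = ∑ k ∈ Finset.Icc 1 r, ∑ l ∈ Finset.Icc 1 s, ∑ t ∈ Finset.range r,
            (if t < k then δ k else 0) * (if t < l then δh l else 0) := by
          refine Finset.sum_congr rfl fun k _ => Finset.sum_congr rfl fun l _ => ?_
          rw [Finset.mul_sum]
          refine Finset.sum_congr rfl fun t _ => ?_
          split_ifs <;> ring
      _ = ∑ k ∈ Finset.Icc 1 r, ∑ t ∈ Finset.range r, ∑ l ∈ Finset.Icc 1 s,
            (if t < k then δ k else 0) * (if t < l then δh l else 0) :=
          Finset.sum_congr rfl fun k _ => Finset.sum_comm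
      _ = ∑ t ∈ Finset.range r, ∑ k ∈ Finset.Icc 1 r, ∑ l ∈ Finset.Icc 1 s,
            (if t < k then δ k else 0) * (if t < l then δh l else 0) :=
          Finset.sum_comm
      _ = ∑ t ∈ Finset.range r, σ (t+1) * σh (t+1) := by
          refine Finset.sum_congr rfl fun t ht => ?_
          have ht' := Finset.mem_range.mp ht
          rw [← Finset.sum_mul_sum, ← e1 t ht', ← e2 t (by omega)]
  rw [step3]
  have hre : ∑ j ∈ Finset.Icc 1 r, σ j * σh j = ∑ t ∈ Finset.range r, σ (t+1) * σh (t+1) := by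
    rw [← Finset.Ico_add_one_right_eq_Icc, Finset.sum_Ico_eq_sum_range]
    refine Finset.sum_congr (by norm_num) fun t _ => by rw [Nat.add_comm 1 t]
  rw [hre]

lemma conj_mul_self_eq (z : ℂ) : star z * z = ((‖z‖ ^ 2 : ℝ) : ℂ) := by
  have : star z * z = z * star z := mul_comm _ _
  rw [this]
  rw [show (star z) = (starRingEnd ℂ) z from rfl, Complex.mul_conj]
  rw [Complex.normSq_eq_norm_sq]

lemma trace_conj_self {m n : ℕ} (X : Matrix (Fin m) (Fin n) ℂ) :
    Matrix.trace (Xᴴ * X) = ((∑ i, ∑ j, ‖X i j‖ ^ 2 : ℝ) : ℂ) := by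
  rw [Matrix.trace]
  push_cast
  rw [Finset.sum_comm]
  refine Finset.sum_congr rfl fun j _ => ?_
  rw [Matrix.diag_apply, Matrix.mul_apply]
  push_cast
  refine Finset.sum_congr rfl fun i _ => ?_
  rw [Matrix.conjTranspose_apply, conj_mul_self_eq]
  push_cast
  ring

lemma unitary_row {k : ℕ} (W : Matrix (Fin k) (Fin k) ℂ) (hW : W * Wᴴ = 1) (b : Fin k) :
    ∑ c, ‖W b c‖ ^ 2 = 1 := by
  have h := congrArg (fun M => M b b) hW
  simp only [Matrix.mul_apply, Matrix.one_apply_eq] at h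
  have : (((∑ c, ‖W b c‖ ^ 2 : ℝ)) : ℂ) = 1 := by
    rw [← h]
    push_cast
    refine Finset.sum_congr rfl fun c _ => ?_
    rw [Matrix.conjTranspose_apply]
    have h2 := conj_mul_self_eq (W b c)
    push_cast at h2
    rw [← h2]; ring
  exact_mod_cast this

lemma unitary_col {k : ℕ} (W : Matrix (Fin k) (Fin k) ℂ) (hW : Wᴴ * W = 1) (c : Fin k) :
    ∑ b, ‖W b c‖ ^ 2 = 1 := by
  have h := congrArg (fun M => M c c) hW
  simp only [Matrix.mul_apply, Matrix.one_apply_eq] at h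
  have : (((∑ b, ‖W b c‖ ^ 2 : ℝ)) : ℂ) = 1 := by
    rw [← h]
    push_cast
    refine Finset.sum_congr rfl fun b _ => ?_
    rw [Matrix.conjTranspose_apply]
    have h2 := conj_mul_self_eq (W b c)
    push_cast at h2
    rw [← h2]
  exact_mod_cast this

lemma fin_eq_of_val {k : ℕ} (a b : Fin k) (h : (a:ℕ) = (b:ℕ)) : a = b := Fin.ext h

lemma sumsq_svd (m n r : ℕ) (hrm : r ≤ m) (hrn : r ≤ n) (σ : ℕ → ℝ) :
    ∑ i, ∑ j, ‖svdMat m n r σ i j‖ ^ 2 = ∑ j ∈ Finset.Icc 1 r, σ j ^ 2 := by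
  have hentry : ∀ (i : Fin m) (j : Fin n), ‖svdMat m n r σ i j‖ ^ 2
      = if (i:ℕ) = (j:ℕ) ∧ (i:ℕ) < r then σ ((i:ℕ)+1) ^ 2 else 0 := by
    intro i j
    by_cases h : (i:ℕ) = (j:ℕ) ∧ (i:ℕ) < r
    · rw [if_pos h, svdMat, Matrix.of_apply, if_pos h, Complex.norm_real,
        Real.norm_eq_abs, sq_abs]
    · rw [if_neg h, svdMat, Matrix.of_apply, if_neg h, norm_zero]
      ring
  calc ∑ i, ∑ j, ‖svdMat m n r σ i j‖ ^ 2
      = ∑ i : Fin m, ∑ j ∈ Finset.range n,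
          (if (i:ℕ) = j ∧ (i:ℕ) < r then σ ((i:ℕ)+1) ^ 2 else 0) := by
        refine Finset.sum_congr rfl fun i _ => ?_
        rw [← Fin.sum_univ_eq_sum_range
          (fun j => if (i:ℕ) = j ∧ (i:ℕ) < r then σ ((i:ℕ)+1) ^ 2 else 0) n]
        exact Finset.sum_congr rfl fun j _ => hentry i j
    _ = ∑ i ∈ Finset.range m, ∑ j ∈ Finset.range n,
          (if i = j ∧ i < r then σ (i+1) ^ 2 else 0) :=
        Fin.sum_univ_eq_sum_range (fun i => ∑ j ∈ Finset.range n,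
          (if i = j ∧ i < r then σ (i+1) ^ 2 else 0)) m
    _ = ∑ i ∈ Finset.range m, (if i < r then σ (i+1) ^ 2 else 0) := by
        refine Finset.sum_congr rfl fun i _ => ?_
        by_cases hi : i < r
        · rw [if_pos hi]
          rw [Finset.sum_eq_single_of_mem i (Finset.mem_range.mpr (by omega))]
          · rw [if_pos ⟨rfl, hi⟩]
          · intro b _ hb; rw [if_neg (by tauto)]
        · rw [if_neg hi]
          exact Finset.sum_eq_zero fun b _ => by rw [if_neg (by tauto)]
    _ = ∑ i ∈ Finset.range r, σ (i+1) ^ 2 := cutsum' m r hrm _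
    _ = ∑ j ∈ Finset.Icc 1 r, σ j ^ 2 := by
        rw [← Finset.Ico_add_one_right_eq_Icc, Finset.sum_Ico_eq_sum_range]
        refine (Finset.sum_congr (by norm_num) fun t _ => by rw [Nat.add_comm 1 t]).symm

lemma trace_expand (m n r s : ℕ) (hm : 0 < m) (hn : 0 < n)
    (hrm : r ≤ m) (hrn : r ≤ n) (hsm : s ≤ m) (hsn : s ≤ n)
    (σ σh : ℕ → ℝ) (W : Matrix (Fin m) (Fin m) ℂ) (Z : Matrix (Fin n) (Fin n) ℂ) :
    Matrix.trace ((svdMat m n s σh)ᴴ * (W * (svdMat m n r σ * Z)))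
      = ∑ j ∈ Finset.range s, ∑ i ∈ Finset.range r,
          ((σh (j+1) : ℂ) * (σ (i+1) : ℂ)) *
            (W ⟨j % m, Nat.mod_lt _ hm⟩ ⟨i % m, Nat.mod_lt _ hm⟩ *
             Z ⟨i % n, Nat.mod_lt _ hn⟩ ⟨j % n, Nat.mod_lt _ hn⟩) := by
  set fm : ℕ → Fin m := fun t => ⟨t % m, Nat.mod_lt _ hm⟩ with hfm
  set fn : ℕ → Fin n := fun t => ⟨t % n, Nat.mod_lt _ hn⟩ with hfn
  have fmv : ∀ t, t < m → ((fm t : ℕ)) = t := fun t ht => Nat.mod_eq_of_lt ht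
  have fnv : ∀ t, t < n → ((fn t : ℕ)) = t := fun t ht => Nat.mod_eq_of_lt ht
  have h1 : ∀ (c : Fin m) (a : Fin n), (svdMat m n r σ * Z) c a
      = if (c:ℕ) < r then (σ ((c:ℕ)+1) : ℂ) * Z (fn (c:ℕ)) a else 0 := by
    intro c a
    rw [Matrix.mul_apply]
    by_cases hc : (c:ℕ) < r
    · rw [if_pos hc]
      rw [Finset.sum_eq_single_of_mem (fn (c:ℕ)) (Finset.mem_univ _)]
      · rw [svdMat, Matrix.of_apply, if_pos ⟨(fnv (c:ℕ) (by omega)).symm, hc⟩]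
      · intro b _ hb
        rw [svdMat, Matrix.of_apply, if_neg, zero_mul]
        rintro ⟨hcb, -⟩
        exact hb (fin_eq_of_val b (fn (c:ℕ)) (by rw [fnv (c:ℕ) (by omega)]; omega))
    · rw [if_neg hc]
      refine Finset.sum_eq_zero fun b _ => ?_
      rw [svdMat, Matrix.of_apply, if_neg (by tauto), zero_mul]
  have h2 : ∀ (b : Fin m) (a : Fin n), (W * (svdMat m n r σ * Z)) b a
      = ∑ i ∈ Finset.range r, (σ (i+1) : ℂ) * (W b (fm i) * Z (fn i) a) := by
    intro b a
    rw [Matrix.mul_apply]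
    have : ∀ c : Fin m, W b c * (svdMat m n r σ * Z) c a
        = (fun t : ℕ => if t < r then (σ (t+1) : ℂ) * (W b (fm t) * Z (fn t) a) else 0)
            (c:ℕ) := by
      intro c
      rw [h1 c a]
      by_cases hc : (c:ℕ) < r
      · simp only [if_pos hc]
        have : fm (c:ℕ) = c := fin_eq_of_val _ _ (fmv (c:ℕ) c.isLt)
        rw [this]; ring
      · simp only [if_neg hc, mul_zero]
    rw [Finset.sum_congr rfl fun c _ => this c,
      Fin.sum_univ_eq_sum_range
        (fun t : ℕ => if t < r then (σ (t+1) : ℂ) * (W b (fm t) * Z (fn t) a) else 0) m]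
    exact cutsum' m r hrm _
  have h3 : Matrix.trace ((svdMat m n s σh)ᴴ * (W * (svdMat m n r σ * Z)))
      = ∑ j ∈ Finset.range s, (σh (j+1) : ℂ) *
          (W * (svdMat m n r σ * Z)) (fm j) (fn j) := by
    set M := W * (svdMat m n r σ * Z) with hM
    rw [Matrix.trace]
    have inner : ∀ a : Fin n, ((svdMat m n s σh)ᴴ * M).diag a
        = (fun t : ℕ => if t < s then (σh (t+1) : ℂ) * M (fm t) (fn t) else 0) (a:ℕ) := by
      intro a
      rw [Matrix.diag_apply, Matrix.mul_apply]
      by_cases ha : (a:ℕ) < s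
      · simp only [if_pos ha]
        have han : fn (a:ℕ) = a := fin_eq_of_val _ _ (fnv (a:ℕ) a.isLt)
        rw [han]
        have hfma : ((fm (a:ℕ)):ℕ) = (a:ℕ) := fmv _ (by omega)
        rw [Finset.sum_eq_single_of_mem (fm (a:ℕ)) (Finset.mem_univ _)]
        · rw [Matrix.conjTranspose_apply, svdMat, Matrix.of_apply,
            if_pos ⟨hfma, by rw [hfma]; exact ha⟩, hfma, Complex.star_def,
            Complex.conj_ofReal]
        · intro b _ hb
          rw [Matrix.conjTranspose_apply, svdMat, Matrix.of_apply, if_neg, star_zero,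
            zero_mul]
          rintro ⟨hba, -⟩
          exact hb (fin_eq_of_val b (fm (a:ℕ)) (by rw [hfma]; exact hba))
      · simp only [if_neg ha]
        refine Finset.sum_eq_zero fun b _ => ?_
        rw [Matrix.conjTranspose_apply, svdMat, Matrix.of_apply, if_neg, star_zero, zero_mul]
        rintro ⟨hba, hbs⟩
        omega
    rw [Finset.sum_congr rfl fun a _ => inner a,
      Fin.sum_univ_eq_sum_range
        (fun t : ℕ => if t < s then (σh (t+1) : ℂ) * M (fm t) (fn t) else 0) n]
    exact cutsum' n s hsn _
  rw [h3]
  refine Finset.sum_congr rfl fun j hj => ?_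
  rw [h2, Finset.mul_sum]
  refine Finset.sum_congr rfl fun i _ => by ring

theorem stronger_Cauchy_Schwarz
    (m n r s : ℕ) (hm : 0 < m) (hn : 0 < n) (hrs : r ≤ s) (hsmn : s ≤ min m n)
    (A B : Matrix (Fin m) (Fin n) ℂ)
    (σ σh : ℕ → ℝ) (hσ : SingVals r σ) (hσh : SingVals s σh)
    (hA : HasSVD A r σ) (hB : HasSVD B s σh)
    (hrankA : A.rank = r) (hrankB : B.rank = s) :
    ‖Matrix.trace (Bᴴ * A)‖ ≤
      ((∑ j ∈ Finset.Icc 1 r, σ j * σh j) /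
        (Real.sqrt (∑ j ∈ Finset.Icc 1 r, σ j ^ 2) *
         Real.sqrt (∑ j ∈ Finset.Icc 1 s, σh j ^ 2))) *
      (frob A * frob B) := by
  classical
  obtain ⟨U, V, hU1, hU2, hV1, hV2, hAeq⟩ := hA
  obtain ⟨U', V', hU'1, hU'2, hV'1, hV'2, hBeq⟩ := hB
  have hsm : s ≤ m := le_trans hsmn (min_le_left _ _)
  have hsn : s ≤ n := le_trans hsmn (min_le_right _ _)
  have hrm : r ≤ m := le_trans hrs hsm
  have hrn : r ≤ n := le_trans hrs hsn
  rcases Nat.eq_zero_or_pos r with hr0 | hr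
  · -- r = 0 : A = 0
    subst hr0
    have hD0 : svdMat m n 0 σ = 0 := by
      ext i j
      simp [svdMat]
    have hA0 : A = 0 := by rw [hAeq, hD0, Matrix.mul_zero, Matrix.zero_mul]
    rw [hA0, Matrix.mul_zero, Matrix.trace_zero, norm_zero]
    have : (Finset.Icc 1 0 : Finset ℕ) = ∅ := by simp
    rw [this, Finset.sum_empty, zero_div, zero_mul]
  -- main case : 1 ≤ r
  -- Frobenius norms
  have frobA : frob A = Real.sqrt (∑ j ∈ Finset.Icc 1 r, σ j ^ 2) := by
    rw [frob]
    congr 1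
    have hc : ((∑ i, ∑ j, ‖A i j‖ ^ 2 : ℝ) : ℂ)
        = ((∑ i, ∑ j, ‖svdMat m n r σ i j‖ ^ 2 : ℝ) : ℂ) := by
      rw [← trace_conj_self A, ← trace_conj_self (svdMat m n r σ), hAeq]
      have h5 : (U * svdMat m n r σ * Vᴴ)ᴴ * (U * svdMat m n r σ * Vᴴ)
          = V * ((svdMat m n r σ)ᴴ * svdMat m n r σ * Vᴴ) := by
        rw [Matrix.conjTranspose_mul, Matrix.conjTranspose_mul,
          Matrix.conjTranspose_conjTranspose]
        calc V * ((svdMat m n r σ)ᴴ * Uᴴ) * (U * svdMat m n r σ * Vᴴ)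
            = V * ((svdMat m n r σ)ᴴ * (Uᴴ * U * (svdMat m n r σ * Vᴴ))) := by
              simp only [Matrix.mul_assoc]
          _ = V * ((svdMat m n r σ)ᴴ * svdMat m n r σ * Vᴴ) := by
              rw [hU1, Matrix.one_mul, Matrix.mul_assoc]
      rw [h5, Matrix.trace_mul_comm, Matrix.mul_assoc, hV1, Matrix.mul_one]
    have h6 := Complex.ofReal_inj.mp hc
    rw [h6, sumsq_svd m n r hrm hrn σ]
  have frobB : frob B = Real.sqrt (∑ j ∈ Finset.Icc 1 s, σh j ^ 2) := by
    rw [frob]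
    congr 1
    have hc : ((∑ i, ∑ j, ‖B i j‖ ^ 2 : ℝ) : ℂ)
        = ((∑ i, ∑ j, ‖svdMat m n s σh i j‖ ^ 2 : ℝ) : ℂ) := by
      rw [← trace_conj_self B, ← trace_conj_self (svdMat m n s σh), hBeq]
      have h5 : (U' * svdMat m n s σh * V'ᴴ)ᴴ * (U' * svdMat m n s σh * V'ᴴ)
          = V' * ((svdMat m n s σh)ᴴ * svdMat m n s σh * V'ᴴ) := by
        rw [Matrix.conjTranspose_mul, Matrix.conjTranspose_mul,
          Matrix.conjTranspose_conjTranspose]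
        calc V' * ((svdMat m n s σh)ᴴ * U'ᴴ) * (U' * svdMat m n s σh * V'ᴴ)
            = V' * ((svdMat m n s σh)ᴴ * (U'ᴴ * U' * (svdMat m n s σh * V'ᴴ))) := by
              simp only [Matrix.mul_assoc]
          _ = V' * ((svdMat m n s σh)ᴴ * svdMat m n s σh * V'ᴴ) := by
              rw [hU'1, Matrix.one_mul, Matrix.mul_assoc]
      rw [h5, Matrix.trace_mul_comm, Matrix.mul_assoc, hV'1, Matrix.mul_one]
    have h6 := Complex.ofReal_inj.mp hc
    rw [h6, sumsq_svd m n s hsm hsn σh]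
  -- the unitary factors
  set W : Matrix (Fin m) (Fin m) ℂ := U'ᴴ * U with hW
  set Z : Matrix (Fin n) (Fin n) ℂ := Vᴴ * V' with hZ
  have hWW : W * Wᴴ = 1 := by
    rw [hW, Matrix.conjTranspose_mul, Matrix.conjTranspose_conjTranspose]
    calc U'ᴴ * U * (Uᴴ * U') = U'ᴴ * (U * Uᴴ * U') := by simp only [Matrix.mul_assoc]
      _ = 1 := by rw [hU2, Matrix.one_mul, hU'1]
  have hWW' : Wᴴ * W = 1 := by
    rw [hW, Matrix.conjTranspose_mul, Matrix.conjTranspose_conjTranspose]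
    calc Uᴴ * U' * (U'ᴴ * U) = Uᴴ * (U' * U'ᴴ * U) := by simp only [Matrix.mul_assoc]
      _ = 1 := by rw [hU'2, Matrix.one_mul, hU1]
  have hZZ : Z * Zᴴ = 1 := by
    rw [hZ, Matrix.conjTranspose_mul, Matrix.conjTranspose_conjTranspose]
    calc Vᴴ * V' * (V'ᴴ * V) = Vᴴ * (V' * V'ᴴ * V) := by simp only [Matrix.mul_assoc]
      _ = 1 := by rw [hV'2, Matrix.one_mul, hV1]
  have hZZ' : Zᴴ * Z = 1 := by
    rw [hZ, Matrix.conjTranspose_mul, Matrix.conjTranspose_conjTranspose]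
    calc V'ᴴ * V * (Vᴴ * V') = V'ᴴ * (V * Vᴴ * V') := by simp only [Matrix.mul_assoc]
      _ = 1 := by rw [hV2, Matrix.one_mul, hV'1]
  -- the trace identity
  have htr : Matrix.trace (Bᴴ * A)
      = Matrix.trace ((svdMat m n s σh)ᴴ * (W * (svdMat m n r σ * Z))) := by
    rw [hAeq, hBeq]
    rw [Matrix.conjTranspose_mul, Matrix.conjTranspose_mul,
      Matrix.conjTranspose_conjTranspose]
    have e : V' * ((svdMat m n s σh)ᴴ * U'ᴴ) * (U * svdMat m n r σ * Vᴴ)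
        = V' * ((svdMat m n s σh)ᴴ * (W * (svdMat m n r σ * Vᴴ))) := by
      rw [hW]
      simp only [Matrix.mul_assoc]
    rw [e, Matrix.trace_mul_comm]
    have e2 : (svdMat m n s σh)ᴴ * (W * (svdMat m n r σ * Vᴴ)) * V'
        = (svdMat m n s σh)ᴴ * (W * (svdMat m n r σ * Z)) := by
      rw [hZ]
      simp only [Matrix.mul_assoc]
    rw [e2]
  have hexp := trace_expand m n r s hm hn hrm hrn hsm hsn σ σh W Z
  -- substochastic data
  set d : ℕ → ℕ → ℝ := fun i j =>
    (‖W ⟨j % m, Nat.mod_lt _ hm⟩ ⟨i % m, Nat.mod_lt _ hm⟩‖ ^ 2 +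
     ‖Z ⟨i % n, Nat.mod_lt _ hn⟩ ⟨j % n, Nat.mod_lt _ hn⟩‖ ^ 2) / 2 with hd
  have hd0 : ∀ i j, 0 ≤ d i j := fun i j => by rw [hd]; positivity
  -- partial row sums of squared norms are at most 1
  have partial_sum : ∀ (k K : ℕ) (hk : 0 < k) (hK : K ≤ k) (f : Fin k → ℝ),
      (∀ c, 0 ≤ f c) → (∑ c, f c = 1) →
      ∑ i ∈ Finset.range K, f ⟨i % k, Nat.mod_lt _ hk⟩ ≤ 1 := by
    intro k K hk hK f hf h1
    have hinj : ∀ x ∈ Finset.range K, ∀ y ∈ Finset.range K,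
        (fun i : ℕ => (⟨i % k, Nat.mod_lt _ hk⟩ : Fin k)) x
          = (fun i : ℕ => (⟨i % k, Nat.mod_lt _ hk⟩ : Fin k)) y → x = y := by
      intro x hx y hy hxy
      have hx' := Finset.mem_range.mp hx
      have hy' := Finset.mem_range.mp hy
      have hv : x % k = y % k := congrArg Fin.val hxy
      rwa [Nat.mod_eq_of_lt (by omega), Nat.mod_eq_of_lt (by omega)] at hv
    have himg := Finset.sum_image (f := f)
      (g := fun i : ℕ => (⟨i % k, Nat.mod_lt _ hk⟩ : Fin k)) (s := Finset.range K) hinj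
    calc ∑ i ∈ Finset.range K, f ⟨i % k, Nat.mod_lt _ hk⟩
        = ∑ x ∈ (Finset.range K).image (fun i : ℕ => (⟨i % k, Nat.mod_lt _ hk⟩ : Fin k)),
            f x := himg.symm
      _ ≤ ∑ c, f c := Finset.sum_le_univ_sum_of_nonneg hf
      _ = 1 := h1
  have hrow : ∀ j < s, ∑ i ∈ Finset.range r, d i j ≤ 1 := by
    intro j hj
    have hW1 : ∑ i ∈ Finset.range r,
        ‖W ⟨j % m, Nat.mod_lt _ hm⟩ ⟨i % m, Nat.mod_lt _ hm⟩‖ ^ 2 ≤ 1 :=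
      partial_sum m r hm hrm (fun c => ‖W ⟨j % m, Nat.mod_lt _ hm⟩ c‖ ^ 2)
        (fun c => by positivity) (unitary_row W hWW _)
    have hZ1 : ∑ i ∈ Finset.range r,
        ‖Z ⟨i % n, Nat.mod_lt _ hn⟩ ⟨j % n, Nat.mod_lt _ hn⟩‖ ^ 2 ≤ 1 :=
      partial_sum n r hn hrn (fun e => ‖Z e ⟨j % n, Nat.mod_lt _ hn⟩‖ ^ 2)
        (fun e => by positivity) (unitary_col Z hZZ' _)
    rw [hd]
    simp only
    rw [← Finset.sum_div, Finset.sum_add_distrib]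
    linarith
  have hcol : ∀ i < r, ∑ j ∈ Finset.range s, d i j ≤ 1 := by
    intro i hi
    have hW1 : ∑ j ∈ Finset.range s,
        ‖W ⟨j % m, Nat.mod_lt _ hm⟩ ⟨i % m, Nat.mod_lt _ hm⟩‖ ^ 2 ≤ 1 :=
      partial_sum m s hm hsm (fun b => ‖W b ⟨i % m, Nat.mod_lt _ hm⟩‖ ^ 2)
        (fun b => by positivity) (unitary_col W hWW' _)
    have hZ1 : ∑ j ∈ Finset.range s,
        ‖Z ⟨i % n, Nat.mod_lt _ hn⟩ ⟨j % n, Nat.mod_lt _ hn⟩‖ ^ 2 ≤ 1 :=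
      partial_sum n s hn hsn (fun e => ‖Z ⟨i % n, Nat.mod_lt _ hn⟩ e‖ ^ 2)
        (fun e => by positivity) (unitary_row Z hZZ _)
    rw [hd]
    simp only
    rw [← Finset.sum_div, Finset.sum_add_distrib]
    linarith
  -- the norm bound
  have hbound : ‖Matrix.trace (Bᴴ * A)‖ ≤ ∑ j ∈ Finset.Icc 1 r, σ j * σh j := by
    rw [htr, hexp]
    calc ‖∑ j ∈ Finset.range s, ∑ i ∈ Finset.range r,
            ((σh (j+1) : ℂ) * (σ (i+1) : ℂ)) *
              (W ⟨j % m, Nat.mod_lt _ hm⟩ ⟨i % m, Nat.mod_lt _ hm⟩ *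
               Z ⟨i % n, Nat.mod_lt _ hn⟩ ⟨j % n, Nat.mod_lt _ hn⟩)‖
        ≤ ∑ j ∈ Finset.range s, ∑ i ∈ Finset.range r,
            ‖((σh (j+1) : ℂ) * (σ (i+1) : ℂ)) *
              (W ⟨j % m, Nat.mod_lt _ hm⟩ ⟨i % m, Nat.mod_lt _ hm⟩ *
               Z ⟨i % n, Nat.mod_lt _ hn⟩ ⟨j % n, Nat.mod_lt _ hn⟩)‖ :=
          (norm_sum_le _ _).trans (Finset.sum_le_sum fun j _ => norm_sum_le _ _)
      _ ≤ ∑ j ∈ Finset.range s, ∑ i ∈ Finset.range r, σ (i+1) * σh (j+1) * d i j := by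
          refine Finset.sum_le_sum fun j hj => Finset.sum_le_sum fun i hi => ?_
          have hj' := Finset.mem_range.mp hj
          have hi' := Finset.mem_range.mp hi
          have hσi : 0 < σ (i+1) := hσ.1 (i+1) (by omega) (by omega)
          have hσhj : 0 < σh (j+1) := hσh.1 (j+1) (by omega) (by omega)
          rw [norm_mul, norm_mul, norm_mul, Complex.norm_real, Complex.norm_real,
            Real.norm_eq_abs, Real.norm_eq_abs, abs_of_pos hσi, abs_of_pos hσhj]
          have key : ‖W ⟨j % m, Nat.mod_lt _ hm⟩ ⟨i % m, Nat.mod_lt _ hm⟩‖ *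
              ‖Z ⟨i % n, Nat.mod_lt _ hn⟩ ⟨j % n, Nat.mod_lt _ hn⟩‖ ≤ d i j := by
            rw [hd]
            simp only
            nlinarith [sq_nonneg (‖W ⟨j % m, Nat.mod_lt _ hm⟩ ⟨i % m, Nat.mod_lt _ hm⟩‖
              - ‖Z ⟨i % n, Nat.mod_lt _ hn⟩ ⟨j % n, Nat.mod_lt _ hn⟩‖)]
          calc σh (j+1) * σ (i+1) *
                (‖W ⟨j % m, Nat.mod_lt _ hm⟩ ⟨i % m, Nat.mod_lt _ hm⟩‖ *
                 ‖Z ⟨i % n, Nat.mod_lt _ hn⟩ ⟨j % n, Nat.mod_lt _ hn⟩‖)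
              ≤ σh (j+1) * σ (i+1) * d i j :=
                mul_le_mul_of_nonneg_left key (by positivity)
            _ = σ (i+1) * σh (j+1) * d i j := by ring
      _ ≤ ∑ j ∈ Finset.Icc 1 r, σ j * σh j :=
          substoch_bound r s hrs σ σh hσ.1 hσ.2 hσh.1 hσh.2 d hd0 hrow hcol
  -- simplify the right-hand side
  have hXpos : 0 < ∑ j ∈ Finset.Icc 1 r, σ j ^ 2 := by
    refine Finset.sum_pos (fun j hj => ?_) ⟨1, Finset.mem_Icc.mpr (by omega)⟩
    rw [Finset.mem_Icc] at hj
    have := hσ.1 j hj.1 hj.2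
    positivity
  have hYpos : 0 < ∑ j ∈ Finset.Icc 1 s, σh j ^ 2 := by
    refine Finset.sum_pos (fun j hj => ?_) ⟨1, Finset.mem_Icc.mpr (by omega)⟩
    rw [Finset.mem_Icc] at hj
    have := hσh.1 j hj.1 hj.2
    positivity
  rw [frobA, frobB]
  have hne : Real.sqrt (∑ j ∈ Finset.Icc 1 r, σ j ^ 2) *
      Real.sqrt (∑ j ∈ Finset.Icc 1 s, σh j ^ 2) ≠ 0 := by
    positivity
  rw [div_mul_cancel₀ _ hne]
  exact hbound
end

section
/- Let r ≤ s ≤ n, let A be a normal complex n×n matrix of rank r with nonzero eigenvalues λ_1, …, λ_r, and let B be a normal complex n×n matrix of rank s with nonzero eigenvalues λ̂_1, …, λ̂_s. Set F̂ = Σ_{j=1}^r |λ_j|² + Σ_{j=1}^s |λ̂_j|². Then ‖ |A| − |B| ‖_F ≥ min sqrt( (F̂ − 2 Σ_{t=1}^k |λ̂_{i_t}| |λ_{j_t}|) / (F̂ − 2 Σ_{t=1}^k Re(λ̂_{i_t} · conj(λ_{j_t}))) ) · ‖A − B‖_F, where the minimum is taken over all 1 ≤ k ≤ r, all k-tuples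 (i_1, …, i_k) of pairwise distinct indices in {1, …, s}, and all k-tuples (j_1, …, j_k) of pairwise distinct indices in {1, …, r}. -/
open scoped BigOperators Matrix ComplexOrder

/-- `A` is unitarily diagonalizable with eigenvalues `l 1, …, l r` (indexed from 1)
followed by zeros on the diagonal. -/
def HasEigen {n : ℕ} (A : Matrix (Fin n) (Fin n) ℂ) (r : ℕ) (l : ℕ → ℂ) : Prop :=
  ∃ U : Matrix (Fin n) (Fin n) ℂ, Uᴴ * U = 1 ∧ U * Uᴴ = 1 ∧
    A = U * Matrix.diagonal (fun i : Fin n =>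
      if (i : ℕ) < r then l ((i : ℕ) + 1) else 0) * Uᴴ

section KittanehHelpers

open Matrix
open scoped ComplexOrder
open scoped MatrixOrder

lemma absMat_eq_cfcSqrt {n : ℕ} (A : Matrix (Fin n) (Fin n) ℂ) :
    absMat A = CFC.sqrt (Aᴴ * A) := by
  rw [CFC.sqrt_eq_cfc, cfc_nnreal_eq_real _ (Aᴴ * A) (Matrix.posSemidef_conjTranspose_mul_self A).nonneg,
    (Matrix.posSemidef_conjTranspose_mul_self A).1.cfc_eq]
  simp only [absMat, IsHermitian.cfc, Unitary.conjStarAlgAut_apply]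
  congr 3
  funext i
  simp [Real.coe_sqrt]
  rw [max_eq_left ((Matrix.posSemidef_conjTranspose_mul_self A).eigenvalues_nonneg i)]

lemma absMat_unitary_diag {n : ℕ} (U : Matrix (Fin n) (Fin n) ℂ)
    (hU1 : Uᴴ * U = 1) (d : Fin n → ℂ) :
    absMat (U * Matrix.diagonal d * Uᴴ) =
      U * Matrix.diagonal (fun i => (‖d i‖ : ℂ)) * Uᴴ := by
  have hfun : (fun i : Fin n => (‖d i‖ : ℂ) * (‖d i‖ : ℂ)) = fun i => star (d i) * d i := by
    funext i
    simpa [← Complex.ofReal_mul, ← sq] using (Complex.conj_mul' (d i)).symm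
  have hSpsd : (U * Matrix.diagonal (fun i => (‖d i‖ : ℂ)) * Uᴴ).PosSemidef := by
    have h : (Matrix.diagonal (fun i : Fin n => (‖d i‖ : ℂ))).PosSemidef :=
      Matrix.posSemidef_diagonal_iff.2 fun i => Complex.zero_le_real.2 (norm_nonneg _)
    exact h.mul_mul_conjTranspose_same U
  have hsq : (U * Matrix.diagonal (fun i => (‖d i‖ : ℂ)) * Uᴴ) ^ 2 =
      (U * Matrix.diagonal d * Uᴴ)ᴴ * (U * Matrix.diagonal d * Uᴴ) := by
    have h1 : (U * Matrix.diagonal d * Uᴴ)ᴴ * (U * Matrix.diagonal d * Uᴴ) =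
        U * (Matrix.diagonal (star d) * Matrix.diagonal d) * Uᴴ := by
      simp only [Matrix.conjTranspose_mul, Matrix.conjTranspose_conjTranspose,
        Matrix.diagonal_conjTranspose, Matrix.mul_assoc]
      rw [← Matrix.mul_assoc Uᴴ U, hU1, Matrix.one_mul]
    have h2 : (U * Matrix.diagonal (fun i => (‖d i‖ : ℂ)) * Uᴴ) ^ 2 =
        U * (Matrix.diagonal (fun i => (‖d i‖ : ℂ)) *
          Matrix.diagonal (fun i => (‖d i‖ : ℂ))) * Uᴴ := by
      rw [pow_two]
      simp only [Matrix.mul_assoc]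
      rw [← Matrix.mul_assoc Uᴴ U, hU1, Matrix.one_mul]
    rw [h1, h2, Matrix.diagonal_mul_diagonal, Matrix.diagonal_mul_diagonal, hfun]
    rfl
  rw [absMat_eq_cfcSqrt]
  exact CFC.sqrt_unique (by rw [← hsq, sq]) hSpsd.nonneg

lemma trace_mul_double {n : ℕ} (X W : Matrix (Fin n) (Fin n) ℂ) :
    Matrix.trace (X * W) = ∑ p, ∑ q, X p q * W q p := by
  simp [Matrix.trace, Matrix.diag, Matrix.mul_apply]

lemma trace_diag_conj {n : ℕ} (f g : Fin n → ℂ) (W : Matrix (Fin n) (Fin n) ℂ) :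
    Matrix.trace (Matrix.diagonal f * Wᴴ * Matrix.diagonal g * W) =
      ∑ p, ∑ q, f p * g q * ((starRingEnd ℂ) (W q p) * W q p) := by
  rw [trace_mul_double]
  refine Finset.sum_congr rfl fun p _ => Finset.sum_congr rfl fun q _ => ?_
  have hM : (Matrix.diagonal f * Wᴴ * Matrix.diagonal g) p q =
      f p * (starRingEnd ℂ) (W q p) * g q := by
    simp [Matrix.mul_diagonal, Matrix.diagonal_mul, Matrix.conjTranspose_apply]
  rw [hM]; ring

lemma trace_pair {n : ℕ} (U V : Matrix (Fin n) (Fin n) ℂ) (f g : Fin n → ℂ) :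
    Matrix.trace ((U * Matrix.diagonal f * Uᴴ) * (V * Matrix.diagonal g * Vᴴ)) =
      ∑ p, ∑ q, f p * g q *
        ((starRingEnd ℂ) ((Vᴴ * U) q p) * (Vᴴ * U) q p) := by
  rw [show (U * Matrix.diagonal f * Uᴴ) * (V * Matrix.diagonal g * Vᴴ) =
      U * (Matrix.diagonal f * (Vᴴ * U)ᴴ * Matrix.diagonal g * Vᴴ) from by
    simp only [Matrix.conjTranspose_mul, Matrix.conjTranspose_conjTranspose,
      Matrix.mul_assoc]]
  rw [Matrix.trace_mul_comm]
  rw [show (Matrix.diagonal f * (Vᴴ * U)ᴴ * Matrix.diagonal g * Vᴴ) * U =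
      Matrix.diagonal f * (Vᴴ * U)ᴴ * Matrix.diagonal g * (Vᴴ * U) from by
    simp only [Matrix.mul_assoc]]
  exact trace_diag_conj f g (Vᴴ * U)

lemma conjT_unitary_diag {n : ℕ} (U : Matrix (Fin n) (Fin n) ℂ) (d : Fin n → ℂ) :
    (U * Matrix.diagonal d * Uᴴ)ᴴ = U * Matrix.diagonal (star d) * Uᴴ := by
  simp [Matrix.conjTranspose_mul, Matrix.diagonal_conjTranspose, Matrix.mul_assoc]

lemma trace_self_re {n : ℕ} (U : Matrix (Fin n) (Fin n) ℂ) (hU1 : Uᴴ * U = 1)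
    (d : Fin n → ℂ) :
    (Matrix.trace ((U * Matrix.diagonal d * Uᴴ)ᴴ * (U * Matrix.diagonal d * Uᴴ))).re
      = ∑ i, ‖d i‖ ^ 2 := by
  rw [conjT_unitary_diag, trace_pair, hU1]
  have h : ∀ p : Fin n, ∑ q, star d p * d q *
      ((starRingEnd ℂ) ((1 : Matrix (Fin n) (Fin n) ℂ) q p) *
        (1 : Matrix (Fin n) (Fin n) ℂ) q p) = ((‖d p‖ ^ 2 : ℝ) : ℂ) := by
    intro p
    rw [Finset.sum_eq_single p]
    · simp [Matrix.one_apply, Pi.star_apply, Complex.conj_mul']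
    · intro q _ hq; simp [Matrix.one_apply, hq]
    · intro h; exact absurd (Finset.mem_univ p) h
  rw [Finset.sum_congr rfl fun p _ => h p, Complex.re_sum]
  simp [← Complex.ofReal_pow]

lemma entry_sum_eq {n : ℕ} (M : Matrix (Fin n) (Fin n) ℂ) :
    ∑ i, ∑ j, ‖M i j‖ ^ 2 = (Matrix.trace (Mᴴ * M)).re := by
  rw [trace_mul_double, Finset.sum_comm]
  rw [Complex.re_sum]
  refine Finset.sum_congr rfl fun q _ => ?_
  rw [Complex.re_sum]
  refine Finset.sum_congr rfl fun p _ => ?_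
  simp [Matrix.conjTranspose_apply, Complex.conj_mul', ← Complex.ofReal_pow]

lemma frobSq_sub {n : ℕ} (X Y : Matrix (Fin n) (Fin n) ℂ) :
    ∑ i, ∑ j, ‖(X - Y) i j‖ ^ 2 =
      (Matrix.trace (Xᴴ * X)).re + (Matrix.trace (Yᴴ * Y)).re
        - 2 * (Matrix.trace (Xᴴ * Y)).re := by
  rw [entry_sum_eq]
  have hexp : (X - Y)ᴴ * (X - Y) = Xᴴ * X - Xᴴ * Y - Yᴴ * X + Yᴴ * Y := by
    rw [Matrix.conjTranspose_sub, Matrix.sub_mul, Matrix.mul_sub, Matrix.mul_sub]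
    abel
  rw [hexp]
  simp only [Matrix.trace_add, Matrix.trace_sub, Complex.add_re, Complex.sub_re]
  have h2 : (Matrix.trace (Yᴴ * X)).re = (Matrix.trace (Xᴴ * Y)).re := by
    rw [show Yᴴ * X = (Xᴴ * Y)ᴴ from by simp, Matrix.trace_conjTranspose]
    simp
  rw [h2]; ring

lemma sum_fin_ite {n r : ℕ} (hrn : r ≤ n) (f : ℕ → ℝ) :
    ∑ i : Fin n, (if (i : ℕ) < r then f ((i : ℕ) + 1) else 0) =
      ∑ j ∈ Finset.Icc 1 r, f j := by
  rw [Fin.sum_univ_eq_sum_range (fun i => if i < r then f (i + 1) else 0) n]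
  have hfil : (Finset.range n).filter (· < r) = Finset.range r := by
    ext i; simp only [Finset.mem_filter, Finset.mem_range]; omega
  rw [← Finset.sum_filter, hfil, ← Finset.Ico_add_one_right_eq_Icc, Finset.sum_Ico_eq_sum_range]
  exact Finset.sum_congr rfl fun i _ => by rw [Nat.add_comm]

lemma sum_weight {n : ℕ} (c coef : Fin n → Fin n → ℝ)
    (w : Equiv.Perm (Fin n) → ℝ)
    (hc : ∀ q p, c q p = ∑ σ : Equiv.Perm (Fin n), w σ * (if σ q = p then 1 else 0)) :
    ∑ q, ∑ p, coef q p * c q p = ∑ σ : Equiv.Perm (Fin n), w σ * ∑ q, coef q (σ q) := by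
  have h1 : ∀ q p, coef q p * c q p =
      ∑ σ : Equiv.Perm (Fin n), (if σ q = p then w σ * coef q p else 0) := by
    intro q p
    rw [hc q p, Finset.mul_sum]
    refine Finset.sum_congr rfl fun σ _ => ?_
    split_ifs <;> ring
  calc ∑ q, ∑ p, coef q p * c q p
      = ∑ q, ∑ p, ∑ σ : Equiv.Perm (Fin n),
          (if σ q = p then w σ * coef q p else 0) := by
        exact Finset.sum_congr rfl fun q _ => Finset.sum_congr rfl fun p _ => h1 q p
    _ = ∑ q, ∑ σ : Equiv.Perm (Fin n), ∑ p,
          (if σ q = p then w σ * coef q p else 0) := by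
        exact Finset.sum_congr rfl fun q _ => Finset.sum_comm
    _ = ∑ σ : Equiv.Perm (Fin n), ∑ q, ∑ p,
          (if σ q = p then w σ * coef q p else 0) := Finset.sum_comm
    _ = ∑ σ : Equiv.Perm (Fin n), w σ * ∑ q, coef q (σ q) := by
        refine Finset.sum_congr rfl fun σ _ => ?_
        rw [Finset.mul_sum]
        refine Finset.sum_congr rfl fun q _ => ?_
        rw [Finset.sum_ite_eq Finset.univ (σ q) (fun p => w σ * coef q p)]
        simp

lemma frob_eq {m n : ℕ} (M : Matrix (Fin m) (Fin n) ℂ) :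
    frob M = Real.sqrt (∑ i, ∑ j, ‖M i j‖ ^ 2) := rfl

lemma re_le_norm_mul_conj (z w : ℂ) : (z * (starRingEnd ℂ) w).re ≤ ‖z‖ * ‖w‖ := by
  calc (z * (starRingEnd ℂ) w).re ≤ ‖z * (starRingEnd ℂ) w‖ := Complex.re_le_norm _
    _ = ‖z‖ * ‖w‖ := by rw [norm_mul, RCLike.norm_conj]

end KittanehHelpers
set_option maxHeartbeats 1600000 in
theorem sharp_lower_bound_kittaneh
    (n r s : ℕ) (hrs : r ≤ s) (hsn : s ≤ n)
    (A B : Matrix (Fin n) (Fin n) ℂ)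
    (hA : A * Aᴴ = Aᴴ * A) (hB : B * Bᴴ = Bᴴ * B)
    (l lh : ℕ → ℂ)
    (hAe : HasEigen A r l) (hBe : HasEigen B s lh)
    (hl : ∀ j, 1 ≤ j → j ≤ r → l j ≠ 0) (hlh : ∀ j, 1 ≤ j → j ≤ s → lh j ≠ 0)
    (hrankA : A.rank = r) (hrankB : B.rank = s)
    (Fh : ℝ)
    (hFh : Fh = ∑ j ∈ Finset.Icc 1 r, ‖l j‖ ^ 2 + ∑ j ∈ Finset.Icc 1 s, ‖lh j‖ ^ 2) :
    frob (absMat A - absMat B) ≥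
      sInf {x : ℝ | ∃ k : ℕ, 1 ≤ k ∧ k ≤ r ∧
        ∃ i : Fin k → Fin s, Function.Injective i ∧
        ∃ jj : Fin k → Fin r, Function.Injective jj ∧
        x = Real.sqrt
          ((Fh - 2 * ∑ t, ‖lh ((i t : ℕ) + 1)‖ * ‖l ((jj t : ℕ) + 1)‖) /
           (Fh - 2 * ∑ t, (lh ((i t : ℕ) + 1) *
              (starRingEnd ℂ) (l ((jj t : ℕ) + 1))).re))} *
      frob (A - B) := by
  classical
  have hfrob_nonneg : ∀ (M : Matrix (Fin n) (Fin n) ℂ), 0 ≤ frob M :=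
    fun M => Real.sqrt_nonneg _
  set SET := {x : ℝ | ∃ k : ℕ, 1 ≤ k ∧ k ≤ r ∧
        ∃ i : Fin k → Fin s, Function.Injective i ∧
        ∃ jj : Fin k → Fin r, Function.Injective jj ∧
        x = Real.sqrt
          ((Fh - 2 * ∑ t, ‖lh ((i t : ℕ) + 1)‖ * ‖l ((jj t : ℕ) + 1)‖) /
           (Fh - 2 * ∑ t, (lh ((i t : ℕ) + 1) *
              (starRingEnd ℂ) (l ((jj t : ℕ) + 1))).re))} with hSET
  have hSET_nonneg : ∀ x ∈ SET, 0 ≤ x := by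
    rintro x ⟨k, _, _, i, _, jj, _, rfl⟩
    exact Real.sqrt_nonneg _
  rcases Nat.eq_zero_or_pos r with hr0 | hrpos
  · -- r = 0 : the set is empty
    have hempty : SET = ∅ := by
      rw [hSET]
      ext x
      simp only [Set.mem_setOf_eq, Set.mem_empty_iff_false, iff_false, not_exists]
      rintro k ⟨hk1, hk2, -⟩
      omega
    rw [hempty, Real.sInf_empty, zero_mul]
    exact hfrob_nonneg _
  -- main case : r ≥ 1
  obtain ⟨U, hU1, hU2, hAeq⟩ := hAe
  obtain ⟨V, hV1, hV2, hBeq⟩ := hBe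
  set dA : Fin n → ℂ := fun i : Fin n => if (i : ℕ) < r then l ((i : ℕ) + 1) else 0
    with hdA
  set dB : Fin n → ℂ := fun i : Fin n => if (i : ℕ) < s then lh ((i : ℕ) + 1) else 0
    with hdB
  set W : Matrix (Fin n) (Fin n) ℂ := Vᴴ * U with hWdef
  have hW1 : Wᴴ * W = 1 := by
    rw [hWdef, Matrix.conjTranspose_mul, Matrix.conjTranspose_conjTranspose]
    calc Uᴴ * V * (Vᴴ * U) = Uᴴ * (V * Vᴴ) * U := by
          simp only [Matrix.mul_assoc]
      _ = 1 := by rw [hV2, Matrix.mul_one, hU1]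
  have hW2 : W * Wᴴ = 1 := by
    rw [hWdef, Matrix.conjTranspose_mul, Matrix.conjTranspose_conjTranspose]
    calc Vᴴ * U * (Uᴴ * V) = Vᴴ * (U * Uᴴ) * V := by
          simp only [Matrix.mul_assoc]
      _ = 1 := by rw [hU2, Matrix.mul_one, hV1]
  set NA := ∑ j ∈ Finset.Icc 1 r, ‖l j‖ ^ 2 with hNA
  set NB := ∑ j ∈ Finset.Icc 1 s, ‖lh j‖ ^ 2 with hNB
  have hsumA : ∑ i : Fin n, ‖dA i‖ ^ 2 = NA := by
    rw [hNA, ← sum_fin_ite (le_trans hrs hsn) (fun j => ‖l j‖ ^ 2)]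
    refine Finset.sum_congr rfl fun i _ => ?_
    by_cases h : (i : ℕ) < r <;> simp [hdA, h]
  have hsumB : ∑ i : Fin n, ‖dB i‖ ^ 2 = NB := by
    rw [hNB, ← sum_fin_ite hsn (fun j => ‖lh j‖ ^ 2)]
    refine Finset.sum_congr rfl fun i _ => ?_
    by_cases h : (i : ℕ) < s <;> simp [hdB, h]
  set X := ∑ q, ∑ p, (‖dB q‖ * ‖dA p‖) * ‖W q p‖ ^ 2 with hXdef
  set Y := ∑ q, ∑ p, ((dB q * (starRingEnd ℂ) (dA p)).re) * ‖W q p‖ ^ 2 with hYdef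
  have habsA : absMat A = U * Matrix.diagonal (fun i => (‖dA i‖ : ℂ)) * Uᴴ := by
    rw [hAeq]; exact absMat_unitary_diag U hU1 dA
  have habsB : absMat B = V * Matrix.diagonal (fun i => (‖dB i‖ : ℂ)) * Vᴴ := by
    rw [hBeq]; exact absMat_unitary_diag V hV1 dB
  have hterm : ∀ p q : Fin n,
      (star dA p * dB q * ((starRingEnd ℂ) (W q p) * W q p)).re
        = (dB q * (starRingEnd ℂ) (dA p)).re * ‖W q p‖ ^ 2 := by
    intro p q
    rw [Complex.conj_mul']
    have h1 : star dA p * dB q * ((‖W q p‖ : ℂ) ^ 2) =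
        ((‖W q p‖ ^ 2 : ℝ) : ℂ) * (dB q * (starRingEnd ℂ) (dA p)) := by
      simp only [Pi.star_apply, Complex.star_def]
      push_cast
      ring
    rw [h1, Complex.re_ofReal_mul]
    ring
  have hfrobsqY : ∑ i, ∑ j, ‖(A - B) i j‖ ^ 2 = Fh - 2 * Y := by
    rw [hAeq, hBeq, frobSq_sub]
    rw [trace_self_re U hU1 dA, trace_self_re V hV1 dB, hsumA, hsumB]
    have hcross : (Matrix.trace ((U * Matrix.diagonal dA * Uᴴ)ᴴ *
        (V * Matrix.diagonal dB * Vᴴ))).re = Y := by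
      rw [conjT_unitary_diag, trace_pair, ← hWdef]
      calc (∑ p, ∑ q, star dA p * dB q *
            ((starRingEnd ℂ) (W q p) * W q p)).re
          = ∑ p, ∑ q, (dB q * (starRingEnd ℂ) (dA p)).re * ‖W q p‖ ^ 2 := by
            rw [Complex.re_sum]
            refine Finset.sum_congr rfl fun p _ => ?_
            rw [Complex.re_sum]
            exact Finset.sum_congr rfl fun q _ => hterm p q
        _ = Y := by rw [hYdef]; exact Finset.sum_comm
    rw [hcross, hFh]
  have hterm2 : ∀ p q : Fin n,
      (star (fun i => ((‖dA i‖ : ℝ) : ℂ)) p * ((‖dB q‖ : ℝ) : ℂ) *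
        ((starRingEnd ℂ) (W q p) * W q p)).re
        = (‖dB q‖ * ‖dA p‖) * ‖W q p‖ ^ 2 := by
    intro p q
    rw [Complex.conj_mul']
    have h1 : star (fun i => ((‖dA i‖ : ℝ) : ℂ)) p * ((‖dB q‖ : ℝ) : ℂ) *
        ((‖W q p‖ : ℂ) ^ 2) = (((‖dB q‖ * ‖dA p‖) * ‖W q p‖ ^ 2 : ℝ) : ℂ) := by
      simp only [Pi.star_apply, Complex.star_def, Complex.conj_ofReal]
      push_cast
      ring
    rw [h1, Complex.ofReal_re]
  have hnormA : ∑ i, ‖((‖dA i‖ : ℝ) : ℂ)‖ ^ 2 = NA := by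
    rw [← hsumA]
    refine Finset.sum_congr rfl fun i _ => ?_
    simp
  have hnormB : ∑ i, ‖((‖dB i‖ : ℝ) : ℂ)‖ ^ 2 = NB := by
    rw [← hsumB]
    refine Finset.sum_congr rfl fun i _ => ?_
    simp
  have hfrobsqX : ∑ i, ∑ j, ‖(absMat A - absMat B) i j‖ ^ 2 = Fh - 2 * X := by
    rw [habsA, habsB, frobSq_sub]
    rw [trace_self_re U hU1 (fun i => ((‖dA i‖ : ℝ) : ℂ)),
      trace_self_re V hV1 (fun i => ((‖dB i‖ : ℝ) : ℂ)), hnormA, hnormB]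
    have hcross : (Matrix.trace ((U * Matrix.diagonal (fun i => ((‖dA i‖ : ℝ) : ℂ)) * Uᴴ)ᴴ *
        (V * Matrix.diagonal (fun i => ((‖dB i‖ : ℝ) : ℂ)) * Vᴴ))).re = X := by
      rw [conjT_unitary_diag, trace_pair, ← hWdef]
      calc (∑ p, ∑ q, star (fun i => ((‖dA i‖ : ℝ) : ℂ)) p * ((‖dB q‖ : ℝ) : ℂ) *
            ((starRingEnd ℂ) (W q p) * W q p)).re
          = ∑ p, ∑ q, (‖dB q‖ * ‖dA p‖) * ‖W q p‖ ^ 2 := by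
            rw [Complex.re_sum]
            refine Finset.sum_congr rfl fun p _ => ?_
            rw [Complex.re_sum]
            exact Finset.sum_congr rfl fun q _ => hterm2 p q
        _ = X := by rw [hXdef]; exact Finset.sum_comm
    rw [hcross, hFh]
  have hfrobAB : frob (A - B) = Real.sqrt (Fh - 2 * Y) := by
    rw [frob_eq, hfrobsqY]
  have hfrobabs : frob (absMat A - absMat B) = Real.sqrt (Fh - 2 * X) := by
    rw [frob_eq, hfrobsqX]
  have hG0 : 0 ≤ Fh - 2 * Y := by
    rw [← hfrobsqY]
    exact Finset.sum_nonneg fun i _ => Finset.sum_nonneg fun j _ => sq_nonneg _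
  have hP0 : 0 ≤ Fh - 2 * X := by
    rw [← hfrobsqX]
    exact Finset.sum_nonneg fun i _ => Finset.sum_nonneg fun j _ => sq_nonneg _
  have hYX : Y ≤ X := by
    rw [hXdef, hYdef]
    refine Finset.sum_le_sum fun q _ => Finset.sum_le_sum fun p _ => ?_
    exact mul_le_mul_of_nonneg_right (re_le_norm_mul_conj _ _) (by positivity)
  -- the matrix of |W q p|^2 is doubly stochastic
  have hCmem : (Matrix.of fun q p => ‖W q p‖ ^ 2) ∈ doublyStochastic ℝ (Fin n) := by
    rw [mem_doublyStochastic_iff_sum]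
    refine ⟨fun i j => by simp only [Matrix.of_apply]; positivity, fun q => ?_, fun p => ?_⟩
    · have h : (W * Wᴴ) q q = 1 := by rw [hW2]; simp [Matrix.one_apply]
      rw [Matrix.mul_apply] at h
      have h2 : ∀ p : Fin n, W q p * Wᴴ p q = ((‖W q p‖ ^ 2 : ℝ) : ℂ) := by
        intro p
        rw [Matrix.conjTranspose_apply, Complex.star_def, Complex.mul_conj,
          Complex.normSq_eq_norm_sq]
      rw [Finset.sum_congr rfl fun p _ => h2 p, ← Complex.ofReal_sum] at h
      have h3 := congrArg Complex.re h
      simpa [Matrix.of_apply, ← Complex.ofReal_pow] using h3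
    · have h : (Wᴴ * W) p p = 1 := by rw [hW1]; simp [Matrix.one_apply]
      rw [Matrix.mul_apply] at h
      have h2 : ∀ q : Fin n, Wᴴ p q * W q p = ((‖W q p‖ ^ 2 : ℝ) : ℂ) := by
        intro q
        rw [Matrix.conjTranspose_apply, Complex.star_def, Complex.conj_mul']
        push_cast
        ring
      rw [Finset.sum_congr rfl fun q _ => h2 q, ← Complex.ofReal_sum] at h
      have h3 := congrArg Complex.re h
      simpa [Matrix.of_apply, ← Complex.ofReal_pow] using h3
  obtain ⟨w, hw0, hw1, hwM⟩ := exists_eq_sum_perm_of_mem_doublyStochastic hCmem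
  have hc : ∀ q p, ‖W q p‖ ^ 2 =
      ∑ σ : Equiv.Perm (Fin n), w σ * (if σ q = p then 1 else 0) := by
    intro q p
    have h : (∑ σ : Equiv.Perm (Fin n), w σ • Equiv.Perm.permMatrix ℝ σ) q p =
        (Matrix.of fun q p => ‖W q p‖ ^ 2) q p := by rw [hwM]
    simp only [Matrix.sum_apply, Finset.sum_apply, Matrix.smul_apply, Matrix.of_apply,
      smul_eq_mul, Equiv.Perm.permMatrix, PEquiv.toMatrix_apply, Equiv.toPEquiv_apply,
      Option.mem_def, Option.some.injEq] at h
    exact h.symm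
  set xs : Equiv.Perm (Fin n) → ℝ := fun σ => ∑ q, ‖dB q‖ * ‖dA (σ q)‖ with hxs
  set ys : Equiv.Perm (Fin n) → ℝ :=
    fun σ => ∑ q, (dB q * (starRingEnd ℂ) (dA (σ q))).re with hys
  have hXsum : X = ∑ σ : Equiv.Perm (Fin n), w σ * xs σ :=
    sum_weight _ _ w hc
  have hYsum : Y = ∑ σ : Equiv.Perm (Fin n), w σ * ys σ :=
    sum_weight _ _ w hc
  have hxsle : ∀ σ : Equiv.Perm (Fin n), 2 * xs σ ≤ Fh := by
    intro σ
    have hperm : ∑ q, ‖dA (σ q)‖ ^ 2 = NA := by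
      rw [← hsumA]
      exact Equiv.sum_comp σ (fun i => ‖dA i‖ ^ 2)
    calc 2 * xs σ = ∑ q, 2 * (‖dB q‖ * ‖dA (σ q)‖) := by
          rw [hxs]; rw [Finset.mul_sum]
      _ ≤ ∑ q, (‖dB q‖ ^ 2 + ‖dA (σ q)‖ ^ 2) := by
          refine Finset.sum_le_sum fun q _ => ?_
          nlinarith [sq_nonneg (‖dB q‖ - ‖dA (σ q)‖)]
      _ = NB + NA := by rw [Finset.sum_add_distrib, hsumB, hperm]
      _ = Fh := by rw [hFh]; ring
  have hysxs : ∀ σ : Equiv.Perm (Fin n), ys σ ≤ xs σ := by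
    intro σ
    exact Finset.sum_le_sum fun q _ => re_le_norm_mul_conj _ _
  have hFhpos : 0 < Fh := by
    have h1 : 0 < NA := by
      refine Finset.sum_pos' (fun j _ => sq_nonneg _)
        ⟨1, Finset.mem_Icc.2 ⟨le_rfl, hrpos⟩, ?_⟩
      have hne := hl 1 le_rfl hrpos
      exact pow_pos (norm_pos_iff.2 hne) 2
    have h2 : 0 ≤ NB := Finset.sum_nonneg fun j _ => sq_nonneg _
    rw [hFh]; linarith
  -- select a good permutation
  have hsel : ∃ σ : Equiv.Perm (Fin n), 0 < w σ ∧
      (Fh - 2 * xs σ) * (Fh - 2 * Y) ≤ (Fh - 2 * X) * (Fh - 2 * ys σ) := by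
    by_contra hcon
    push_neg at hcon
    obtain ⟨σ0, hσ0⟩ : ∃ σ : Equiv.Perm (Fin n), 0 < w σ := by
      by_contra hno
      push_neg at hno
      have hz : ∀ σ : Equiv.Perm (Fin n), w σ = 0 :=
        fun σ => le_antisymm (hno σ) (hw0 σ)
      rw [Finset.sum_congr rfl fun σ _ => hz σ] at hw1
      simp at hw1
    have hlt : ∑ σ' : Equiv.Perm (Fin n), w σ' * ((Fh - 2 * X) * (Fh - 2 * ys σ')) <
        ∑ σ' : Equiv.Perm (Fin n), w σ' * ((Fh - 2 * xs σ') * (Fh - 2 * Y)) := by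
      refine Finset.sum_lt_sum (fun σ' _ => ?_) ⟨σ0, Finset.mem_univ _, ?_⟩
      · rcases eq_or_lt_of_le (hw0 σ') with h | h
        · rw [← h]; simp
        · exact mul_le_mul_of_nonneg_left (le_of_lt (hcon σ' h)) (le_of_lt h)
      · exact (mul_lt_mul_iff_right₀ hσ0).2 (hcon σ0 hσ0)
    have hL : ∑ σ' : Equiv.Perm (Fin n), w σ' * ((Fh - 2 * X) * (Fh - 2 * ys σ')) =
        (Fh - 2 * X) * (Fh - 2 * Y) := by
      have he : ∀ σ' : Equiv.Perm (Fin n),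
          w σ' * ((Fh - 2 * X) * (Fh - 2 * ys σ')) =
          (Fh - 2 * X) * Fh * w σ' - (2 * (Fh - 2 * X)) * (w σ' * ys σ') :=
        fun σ' => by ring
      rw [Finset.sum_congr rfl fun σ' _ => he σ', Finset.sum_sub_distrib,
        ← Finset.mul_sum, ← Finset.mul_sum, hw1, ← hYsum]
      ring
    have hR : ∑ σ' : Equiv.Perm (Fin n), w σ' * ((Fh - 2 * xs σ') * (Fh - 2 * Y)) =
        (Fh - 2 * X) * (Fh - 2 * Y) := by
      have he : ∀ σ' : Equiv.Perm (Fin n),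
          w σ' * ((Fh - 2 * xs σ') * (Fh - 2 * Y)) =
          Fh * (Fh - 2 * Y) * w σ' - (2 * (Fh - 2 * Y)) * (w σ' * xs σ') :=
        fun σ' => by ring
      rw [Finset.sum_congr rfl fun σ' _ => he σ', Finset.sum_sub_distrib,
        ← Finset.mul_sum, ← Finset.mul_sum, hw1, ← hXsum]
      ring
    rw [hL, hR] at hlt
    exact lt_irrefl _ hlt
  obtain ⟨σ, hwσ, hkey⟩ := hsel
  have haσ : 0 ≤ Fh - 2 * xs σ := by linarith [hxsle σ]
  have hbσ : Fh - 2 * xs σ ≤ Fh - 2 * ys σ := by linarith [hysxs σ]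
  have hb0 : 0 ≤ Fh - 2 * ys σ := le_trans haσ hbσ
  set T : Finset (Fin n) :=
    Finset.univ.filter (fun q : Fin n => (q : ℕ) < s ∧ ((σ q : Fin n) : ℕ) < r) with hT
  have hxsT : xs σ = ∑ q ∈ T, ‖lh ((q : ℕ) + 1)‖ * ‖l (((σ q : Fin n) : ℕ) + 1)‖ := by
    have h0 : ∀ q ∈ Finset.univ, q ∉ T → ‖dB q‖ * ‖dA (σ q)‖ = 0 := by
      intro q _ hq
      rw [hT, Finset.mem_filter] at hq
      by_cases h : (q : ℕ) < s
      · have h2 : ¬ ((σ q : Fin n) : ℕ) < r := fun hh => hq ⟨Finset.mem_univ q, h, hh⟩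
        simp [hdA, h2]
      · simp [hdB, h]
    simp only [hxs]
    rw [← Finset.sum_subset (Finset.subset_univ T) h0]
    refine Finset.sum_congr rfl fun q hq => ?_
    rw [hT, Finset.mem_filter] at hq
    simp [hdA, hdB, hq.2.1, hq.2.2]
  have hysT : ys σ = ∑ q ∈ T,
      (lh ((q : ℕ) + 1) * (starRingEnd ℂ) (l (((σ q : Fin n) : ℕ) + 1))).re := by
    have h0 : ∀ q ∈ Finset.univ, q ∉ T →
        (dB q * (starRingEnd ℂ) (dA (σ q))).re = 0 := by
      intro q _ hq
      rw [hT, Finset.mem_filter] at hq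
      by_cases h : (q : ℕ) < s
      · have h2 : ¬ ((σ q : Fin n) : ℕ) < r := fun hh => hq ⟨Finset.mem_univ q, h, hh⟩
        simp [hdA, h2]
      · simp [hdB, h]
    simp only [hys]
    rw [← Finset.sum_subset (Finset.subset_univ T) h0]
    refine Finset.sum_congr rfl fun q hq => ?_
    rw [hT, Finset.mem_filter] at hq
    simp [hdA, hdB, hq.2.1, hq.2.2]
  -- generic final step
  have final : ∀ x₀ ∈ SET, x₀ * frob (A - B) ≤ frob (absMat A - absMat B) →
      frob (absMat A - absMat B) ≥ sInf SET * frob (A - B) := by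
    intro x₀ hmem hle
    refine le_trans (mul_le_mul_of_nonneg_right
      (csInf_le ⟨0, fun x hx => hSET_nonneg x hx⟩ hmem) (hfrob_nonneg _)) hle
  rcases Nat.eq_zero_or_pos T.card with hk0 | hkpos
  · -- degenerate case : use the single pair (1,1)
    have hTe : T = ∅ := Finset.card_eq_zero.1 hk0
    have hxs0 : xs σ = 0 := by rw [hxsT, hTe, Finset.sum_empty]
    have hys0 : ys σ = 0 := by rw [hysT, hTe, Finset.sum_empty]
    rw [hxs0, hys0] at hkey
    have hGP : Fh - 2 * Y ≤ Fh - 2 * X := by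
      refine le_of_mul_le_mul_right ?_ hFhpos
      calc (Fh - 2 * Y) * Fh = Fh * (Fh - 2 * Y) := mul_comm _ _
        _ ≤ (Fh - 2 * X) * Fh := by linarith [hkey]
    have hPeqG : Fh - 2 * X = Fh - 2 * Y :=
      le_antisymm (by linarith [hYX]) hGP
    have h1s : 0 < s := lt_of_lt_of_le hrpos hrs
    set x₀ := Real.sqrt ((Fh - 2 * (‖lh 1‖ * ‖l 1‖)) /
      (Fh - 2 * (lh 1 * (starRingEnd ℂ) (l 1)).re)) with hx₀
    have hmem : x₀ ∈ SET := by
      rw [hSET]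
      refine ⟨1, le_rfl, hrpos, (fun _ => ⟨0, h1s⟩),
        fun a b _ => Subsingleton.elim a b, (fun _ => ⟨0, hrpos⟩),
        fun a b _ => Subsingleton.elim a b, ?_⟩
      rw [hx₀]
      congr 1
      simp
    have h1A : ‖l 1‖ ^ 2 ≤ NA := by
      have h := Finset.single_le_sum (f := fun j => ‖l j‖ ^ 2)
        (fun j _ => sq_nonneg _) (Finset.mem_Icc.2 ⟨le_rfl, hrpos⟩)
      rw [← hNA] at h
      exact h
    have h1B : ‖lh 1‖ ^ 2 ≤ NB := by
      have h := Finset.single_le_sum (f := fun j => ‖lh j‖ ^ 2)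
        (fun j _ => sq_nonneg _) (Finset.mem_Icc.2 ⟨le_rfl, h1s⟩)
      rw [← hNB] at h
      exact h
    have hnum0 : 0 ≤ Fh - 2 * (‖lh 1‖ * ‖l 1‖) := by
      rw [hFh]
      nlinarith [sq_nonneg (‖lh 1‖ - ‖l 1‖), h1A, h1B]
    have hden : Fh - 2 * (‖lh 1‖ * ‖l 1‖) ≤ Fh - 2 * (lh 1 * (starRingEnd ℂ) (l 1)).re := by
      have := re_le_norm_mul_conj (lh 1) (l 1)
      linarith
    have hx₀le1 : x₀ ≤ 1 := by
      rw [hx₀]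
      have hdiv : (Fh - 2 * (‖lh 1‖ * ‖l 1‖)) /
          (Fh - 2 * (lh 1 * (starRingEnd ℂ) (l 1)).re) ≤ 1 := by
        rcases eq_or_lt_of_le (le_trans hnum0 hden) with h | h
        · rw [← h, div_zero]; norm_num
        · rw [div_le_one h]; exact hden
      calc Real.sqrt ((Fh - 2 * (‖lh 1‖ * ‖l 1‖)) /
          (Fh - 2 * (lh 1 * (starRingEnd ℂ) (l 1)).re)) ≤ Real.sqrt 1 :=
            Real.sqrt_le_sqrt hdiv
        _ = 1 := Real.sqrt_one
    refine final x₀ hmem ?_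
    calc x₀ * frob (A - B) ≤ 1 * frob (A - B) :=
          mul_le_mul_of_nonneg_right hx₀le1 (hfrob_nonneg _)
      _ = frob (A - B) := one_mul _
      _ = Real.sqrt (Fh - 2 * Y) := hfrobAB
      _ = Real.sqrt (Fh - 2 * X) := by rw [hPeqG]
      _ = frob (absMat A - absMat B) := hfrobabs.symm
  · -- main case
    have hkr : T.card ≤ r := by
      have hinj : Set.InjOn (fun q : Fin n =>
          if h : ((σ q : Fin n) : ℕ) < r then (⟨((σ q : Fin n) : ℕ), h⟩ : Fin r)
          else ⟨0, hrpos⟩) T := by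
        intro q1 h1 q2 h2 heq
        have h1' := Finset.mem_coe.1 h1
        have h2' := Finset.mem_coe.1 h2
        rw [hT, Finset.mem_filter] at h1' h2'
        simp only [dif_pos h1'.2.2, dif_pos h2'.2.2, Fin.mk.injEq] at heq
        exact σ.injective (Fin.ext heq)
      calc T.card ≤ (Finset.univ : Finset (Fin r)).card :=
            Finset.card_le_card_of_injOn _ (fun q _ => Finset.mem_univ _) hinj
        _ = r := by simp
    set e : Fin T.card ≃ {x // x ∈ T} := T.equivFin.symm with he
    have hmemT : ∀ t : Fin T.card, (e t : Fin n) ∈ T := fun t => (e t).2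
    have hms : ∀ t, ((e t : Fin n) : ℕ) < s :=
      fun t => ((Finset.mem_filter.1 (hmemT t)).2).1
    have hmr : ∀ t, ((σ (e t : Fin n) : Fin n) : ℕ) < r :=
      fun t => ((Finset.mem_filter.1 (hmemT t)).2).2
    have hiInj : Function.Injective (fun t => (⟨((e t : Fin n) : ℕ), hms t⟩ : Fin s)) := by
      intro t1 t2 h
      simp only [Fin.mk.injEq] at h
      exact e.injective (Subtype.ext (Fin.ext h))
    have hjInj : Function.Injective
        (fun t => (⟨((σ (e t : Fin n) : Fin n) : ℕ), hmr t⟩ : Fin r)) := by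
      intro t1 t2 h
      simp only [Fin.mk.injEq] at h
      exact e.injective (Subtype.ext (σ.injective (Fin.ext h)))
    have hsum1 : ∑ t : Fin T.card,
        ‖lh (((⟨((e t : Fin n) : ℕ), hms t⟩ : Fin s) : ℕ) + 1)‖ *
          ‖l (((⟨((σ (e t : Fin n) : Fin n) : ℕ), hmr t⟩ : Fin r) : ℕ) + 1)‖ = xs σ := by
      rw [hxsT]
      rw [← Finset.sum_coe_sort T
        (fun q => ‖lh ((q : ℕ) + 1)‖ * ‖l (((σ q : Fin n) : ℕ) + 1)‖)]
      exact Equiv.sum_comp e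
        (fun x : {x // x ∈ T} =>
          ‖lh (((x : Fin n) : ℕ) + 1)‖ * ‖l (((σ (x : Fin n) : Fin n) : ℕ) + 1)‖)
    have hsum2 : ∑ t : Fin T.card,
        (lh (((⟨((e t : Fin n) : ℕ), hms t⟩ : Fin s) : ℕ) + 1) *
          (starRingEnd ℂ)
            (l (((⟨((σ (e t : Fin n) : Fin n) : ℕ), hmr t⟩ : Fin r) : ℕ) + 1))).re = ys σ := by
      rw [hysT]
      rw [← Finset.sum_coe_sort T
        (fun q => (lh ((q : ℕ) + 1) * (starRingEnd ℂ) (l (((σ q : Fin n) : ℕ) + 1))).re)]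
      exact Equiv.sum_comp e
        (fun x : {x // x ∈ T} =>
          (lh (((x : Fin n) : ℕ) + 1) *
            (starRingEnd ℂ) (l (((σ (x : Fin n) : Fin n) : ℕ) + 1))).re)
    set x₀ := Real.sqrt ((Fh - 2 * xs σ) / (Fh - 2 * ys σ)) with hx₀
    have hmem : x₀ ∈ SET := by
      rw [hSET]
      exact ⟨T.card, hkpos, hkr, _, hiInj, _, hjInj, by rw [hx₀, hsum1, hsum2]⟩
    refine final x₀ hmem ?_
    rw [hfrobAB, hfrobabs, hx₀]
    rw [← Real.sqrt_mul (div_nonneg haσ hb0)]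
    apply Real.sqrt_le_sqrt
    rcases eq_or_lt_of_le hb0 with hb | hb
    · have ha0 : Fh - 2 * xs σ = 0 := le_antisymm (hb ▸ hbσ) haσ
      rw [ha0, zero_div, zero_mul]
      exact hP0
    · rw [div_mul_eq_mul_div, div_le_iff₀ hb]
      exact hkey
end
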